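/- arXiv:1504.06894 — 2 statements merged into one kernel-verified Lean document; each statement's English description precedes it below -/
import Mathlib

section
/- Define the sequence f_n for n \ge 1 by f_1 = E_1 = 1 and the recursion f_n = (1/(2n-1)) \sum_{i=1}^{n-1} \binom{3n-2}{3i-1} g_i g_{n-i} where g_i = (3i-1) f_i / 2. Then f_n = (3n-2)! E_{2n-1} / ((2n-1)! 2^{2n-2}) for all n \ge 1, where E_{2n-1} are the tangent numbers. -/
open scoped BigOperators

/-- A list of integers is *up-down* (alternating) if it rises, falls, rises, ... -/
def IsUpDown (l : List ℤ) : Prop :=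
  ∀ i : ℕ, i + 1 < l.length →
    (Even i → l.getD i 0 < l.getD (i + 1) 0) ∧ (¬ Even i → l.getD (i + 1) 0 < l.getD i 0)

/-- A list of integers is *down-up* if it falls, rises, falls, ... -/
def IsDownUp (l : List ℤ) : Prop :=
  ∀ i : ℕ, i + 1 < l.length →
    (Even i → l.getD (i + 1) 0 < l.getD i 0) ∧ (¬ Even i → l.getD i 0 < l.getD (i + 1) 0)

/-- The list `[1, 2, ..., m]` as integers. -/
def baseList (m : ℕ) : List ℤ := (List.range m).map fun k => (k : ℤ) + 1

/-- The Euler number `E_m`: the number of up-down permutations of `{1, ..., m}`. -/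
noncomputable def eulerNum (m : ℕ) : ℕ :=
  Nat.card {l : List ℤ // l.Perm (baseList m) ∧ IsUpDown l}

open scoped Classical

noncomputable def udFinset (s : List ℤ) : Finset (List ℤ) :=
  s.permutations.toFinset.filter IsUpDown

lemma mem_udFinset {s l : List ℤ} : l ∈ udFinset s ↔ l.Perm s ∧ IsUpDown l := by
  simp [udFinset, List.mem_permutations]

lemma eulerNum_eq_card (m : ℕ) : eulerNum m = (udFinset (baseList m)).card := by
  rw [← Nat.card_eq_finsetCard]
  exact Nat.card_congr (Equiv.subtypeEquivRight (fun l => by simp [mem_udFinset]))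

lemma flatMap_cast (l : List ℕ) : (l.flatMap fun a => [((a : ℕ) : ℤ)]) = l.map (Nat.cast : ℕ → ℤ) := by
  induction l with
  | nil => rfl
  | cons a t ih => rw [List.flatMap_cons, ih, List.map_cons]; rfl

lemma baseList_eq (m : ℕ) : baseList m = List.map (fun k : ℕ => (Nat.cast k : ℤ)+1) (List.range m) := by
  show List.map _ ((List.range m).flatMap fun a => [((a:ℕ) : ℤ)]) = _
  rw [flatMap_cast, List.map_map]
  rfl

lemma baseList_length (m : ℕ) : (baseList m).length = m := by
  rw [baseList_eq, List.length_map, List.length_range]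

lemma baseList_get (m : ℕ) (i : ℕ) (h : i < m) : (baseList m).getD i 0 = (i : ℤ) + 1 := by
  rw [baseList_eq, List.getD_eq_getElem _ _ (by rw [List.length_map, List.length_range]; exact h)]
  simp

lemma baseList_sorted (m : ℕ) : (baseList m).Pairwise (· < ·) := by
  rw [baseList_eq, List.pairwise_map]
  exact (List.pairwise_lt_range (n := m)).imp (by intro a b h; exact add_lt_add_left (Int.ofNat_lt.mpr h) 1)

lemma baseList_nodup (m : ℕ) : (baseList m).Nodup := (baseList_sorted m).nodup

lemma mem_baseList {m : ℕ} {x : ℤ} : x ∈ baseList m ↔ 1 ≤ x ∧ x ≤ m := by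
  rw [baseList_eq]
  simp only [List.mem_map, List.mem_range]
  constructor
  · rintro ⟨k, hk, rfl⟩; constructor <;> [omega; exact_mod_cast by omega]
  · intro ⟨h1, h2⟩
    refine ⟨(x-1).toNat, by omega, by omega⟩

lemma getD_map_lt (f : ℤ → ℤ) (l : List ℤ) {i : ℕ} (h : i < l.length) :
    (l.map f).getD i 0 = f (l.getD i 0) := by
  rw [List.getD_eq_getElem _ _ (by simpa using h), List.getD_eq_getElem _ _ h, List.getElem_map]

lemma getD_mem {l : List ℤ} {i : ℕ} (h : i < l.length) : l.getD i 0 ∈ l := by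
  rw [List.getD_eq_getElem _ _ h]; exact List.getElem_mem _

/-- transfer of up-down along a map that is strictly monotone on the elements -/
lemma isUpDown_map {l : List ℤ} {f : ℤ → ℤ}
    (hf : ∀ x ∈ l, ∀ y ∈ l, (x < y ↔ f x < f y)) :
    IsUpDown (l.map f) ↔ IsUpDown l := by
  have hlen : (l.map f).length = l.length := by simp
  constructor <;> intro h i hi
  · have h' := h i (by omega)
    rw [getD_map_lt f l (by omega), getD_map_lt f l (by omega)] at h'
    have e1 := hf _ (getD_mem (show i < l.length by omega)) _ (getD_mem (show i+1 < l.length by omega))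
    have e2 := hf _ (getD_mem (show i+1 < l.length by omega)) _ (getD_mem (show i < l.length by omega))
    constructor
    · intro he; exact e1.mpr (h'.1 he)
    · intro he; exact e2.mpr (h'.2 he)
  · rw [hlen] at hi
    have h' := h i hi
    rw [getD_map_lt f l (by omega), getD_map_lt f l (by omega)]
    have e1 := hf _ (getD_mem (show i < l.length by omega)) _ (getD_mem (show i+1 < l.length by omega))
    have e2 := hf _ (getD_mem (show i+1 < l.length by omega)) _ (getD_mem (show i < l.length by omega))
    constructor
    · intro he; exact e1.mp (h'.1 he)
    · intro he; exact e2.mp (h'.2 he)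

section relabel
variable {s : List ℤ} (hs : s.Pairwise (· < ·))

private noncomputable def phi (s : List ℤ) : ℤ → ℤ := fun x => (s.idxOf x : ℤ) + 1
private noncomputable def psi (s : List ℤ) : ℤ → ℤ := fun y => s.getD (y - 1).toNat 0

include hs

lemma sorted_lt_iff {i j : ℕ} (hi : i < s.length) (hj : j < s.length) :
    s[i] < s[j] ↔ i < j := by
  constructor
  · intro h
    by_contra hc
    rcases Nat.lt_or_ge j i with hji | hji
    · exact absurd (List.pairwise_iff_get.mp hs ⟨j, hj⟩ ⟨i, hi⟩ hji) (by simp; omega)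
    · have : i = j := by omega
      subst this; omega
  · intro h; exact List.pairwise_iff_get.mp hs ⟨i, hi⟩ ⟨j, hj⟩ h

lemma phi_lt_iff {x y : ℤ} (hx : x ∈ s) (hy : y ∈ s) : x < y ↔ phi s x < phi s y := by
  have hix := List.idxOf_lt_length_iff.mpr hx
  have hiy := List.idxOf_lt_length_iff.mpr hy
  have ex : s[s.idxOf x] = x := List.getElem_idxOf hix
  have ey : s[s.idxOf y] = y := List.getElem_idxOf hiy
  rw [← ex, ← ey, sorted_lt_iff hs hix hiy, phi, phi]
  simp only [ex, ey]
  constructor <;> intro h <;> [exact_mod_cast add_lt_add_left (Int.ofNat_lt.mpr h) 1; omega]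

lemma map_phi_eq : s.map (phi s) = baseList s.length := by
  apply List.ext_getElem (by simp [baseList_length])
  intro i h1 h2
  have hi : i < s.length := by simpa using h1
  have : (baseList s.length)[i] = (i : ℤ) + 1 := by
    rw [← List.getD_eq_getElem _ 0 h2, baseList_get _ _ hi]
  rw [this, List.getElem_map, phi, List.Nodup.idxOf_getElem hs.nodup i hi]

lemma psi_phi {x : ℤ} (hx : x ∈ s) : psi s (phi s x) = x := by
  have hix := List.idxOf_lt_length_iff.mpr hx
  rw [phi, psi]
  simp only [add_sub_cancel_right, Int.toNat_natCast]
  rw [List.getD_eq_getElem _ _ hix]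
  exact List.getElem_idxOf hix

lemma phi_psi {y : ℤ} (hy : y ∈ baseList s.length) : phi s (psi s y) = y := by
  rw [mem_baseList] at hy
  have hlt : (y - 1).toNat < s.length := by omega
  rw [psi, List.getD_eq_getElem _ _ hlt, phi, List.Nodup.idxOf_getElem hs.nodup _ hlt]
  omega

lemma psi_lt_iff {x y : ℤ} (hx : x ∈ baseList s.length) (hy : y ∈ baseList s.length) :
    x < y ↔ psi s x < psi s y := by
  rw [mem_baseList] at hx hy
  have hltx : (x - 1).toNat < s.length := by omega
  have hlty : (y - 1).toNat < s.length := by omega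
  rw [psi, psi, List.getD_eq_getElem _ _ hltx, List.getD_eq_getElem _ _ hlty,
    sorted_lt_iff hs hltx hlty]
  omega

lemma map_psi_eq : (baseList s.length).map (psi s) = s := by
  apply List.ext_getElem (by simp [baseList_length])
  intro i h1 h2
  have hb : i < (baseList s.length).length := by simpa [baseList_length] using h2
  rw [List.getElem_map]
  have hi : i < s.length := h2
  have : (baseList s.length)[i] = (i : ℤ) + 1 := by
    rw [← List.getD_eq_getElem _ 0 (by simpa [baseList_length] using hi), baseList_get _ _ hi]
  rw [this, psi]
  simp only [add_sub_cancel_right, Int.toNat_natCast]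
  rw [List.getD_eq_getElem _ _ hi]

lemma card_udFinset_sorted : (udFinset s).card = eulerNum s.length := by
  rw [eulerNum_eq_card]
  apply Finset.card_bij' (fun l _ => l.map (phi s)) (fun l _ => l.map (psi s))
  · intro l hl
    rw [mem_udFinset] at hl
    rw [List.map_map]
    conv_rhs => rw [← List.map_id l]
    exact List.map_congr_left (fun x hx => psi_phi hs (hl.1.mem_iff.mp hx))
  · intro l hl
    rw [mem_udFinset] at hl
    rw [List.map_map]
    conv_rhs => rw [← List.map_id l]
    exact List.map_congr_left (fun x hx => phi_psi hs (hl.1.mem_iff.mp hx))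
  · intro l hl
    rw [mem_udFinset] at hl ⊢
    refine ⟨(hl.1.map (phi s)).trans (by rw [map_phi_eq hs]), ?_⟩
    rw [isUpDown_map (fun x hx y hy => phi_lt_iff hs (hl.1.mem_iff.mp hx) (hl.1.mem_iff.mp hy))]
    exact hl.2
  · intro l hl
    rw [mem_udFinset] at hl ⊢
    refine ⟨(hl.1.map (psi s)).trans (by rw [map_psi_eq hs]), ?_⟩
    rw [isUpDown_map (fun x hx y hy => psi_lt_iff hs (hl.1.mem_iff.mp hx) (hl.1.mem_iff.mp hy))]
    exact hl.2

end relabel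
lemma not_mem_take_indexOf (l : List ℤ) (a : ℤ) : a ∉ l.take (l.idxOf a) := by
  induction l with
  | nil => simp
  | cons b t ih =>
    by_cases hb : b = a
    · subst hb; rw [List.idxOf_cons_self]; simp
    · rw [List.idxOf_cons_ne _ (by exact fun h => hb h)]
      intro hmem
      rw [List.take_succ_cons, List.mem_cons] at hmem
      rcases hmem with h | h
      · exact hb h.symm
      · exact ih h

lemma toFinset_baseList_succ (N : ℕ) :
    (baseList (N+1)).toFinset = insert ((N:ℤ)+1) (baseList N).toFinset := by
  ext x
  simp only [List.mem_toFinset, Finset.mem_insert, mem_baseList]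
  constructor
  · intro ⟨h1, h2⟩
    by_cases hx : x = (N:ℤ)+1
    · left; exact hx
    · right; push_cast at *; omega
  · intro h
    rcases h with h | ⟨h1, h2⟩
    · subst h; push_cast; omega
    · push_cast at *; omega

lemma getD_take_eq (l : List ℤ) {i k : ℕ} (hik : i < k) (hi : i < l.length) :
    (l.take k).getD i 0 = l.getD i 0 := by
  rw [List.getD_eq_getElem _ _ (by simp; omega), List.getD_eq_getElem _ _ hi, List.getElem_take]

lemma getD_drop_eq (l : List ℤ) {i k : ℕ} (h : k + i < l.length) :
    (l.drop k).getD i 0 = l.getD (k + i) 0 := by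
  rw [List.getD_eq_getElem _ _ (by simp; omega), List.getD_eq_getElem _ _ h, List.getElem_drop]

lemma isUpDown_take {l : List ℤ} (h : IsUpDown l) (k : ℕ) : IsUpDown (l.take k) := by
  intro i hi
  rw [List.length_take] at hi
  have h1 : i < k := by omega
  have h2 : i + 1 < k := by omega
  have h3 : i + 1 < l.length := by omega
  rw [getD_take_eq l h1 (by omega), getD_take_eq l h2 h3]
  exact h i h3

lemma even_shift {k i : ℕ} (hk : Odd k) : Even (k + 1 + i) ↔ Even i := by
  obtain ⟨t, rfl⟩ := hk
  constructor
  · intro ⟨r, hr⟩; exact ⟨r - t - 1, by omega⟩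
  · intro ⟨r, hr⟩; exact ⟨t + 1 + r, by omega⟩

lemma isUpDown_drop_odd {l : List ℤ} (h : IsUpDown l) {k : ℕ} (hk : Odd k) :
    IsUpDown (l.drop (k+1)) := by
  intro i hi
  rw [List.length_drop] at hi
  have h3 : k + 1 + (i + 1) < l.length := by omega
  rw [getD_drop_eq l (by omega), getD_drop_eq l h3]
  have := h (k + 1 + i) (by omega)
  rw [show k + 1 + i + 1 = k + 1 + (i + 1) by omega] at this
  constructor
  · intro he; exact this.1 ((even_shift hk).mpr he)
  · intro he; exact this.2 (fun hc => he ((even_shift hk).mp hc))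

lemma getD_append_lt (u v : List ℤ) {i : ℕ} (h : i < u.length) :
    (u ++ v).getD i 0 = u.getD i 0 := by
  rw [List.getD_eq_getElem _ _ (by simp; omega), List.getD_eq_getElem _ _ h,
    List.getElem_append_left h]

lemma getD_append_ge (u v : List ℤ) {i : ℕ} (h1 : u.length ≤ i) (h2 : i < u.length + v.length) :
    (u ++ v).getD i 0 = v.getD (i - u.length) 0 := by
  rw [List.getD_eq_getElem _ _ (by simp; omega), List.getD_eq_getElem _ _ (by omega),
    List.getElem_append_right h1]

lemma isUpDown_append {u v : List ℤ} {M : ℤ} {k : ℕ} (hk : Odd k)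
    (hu : IsUpDown u) (hv : IsUpDown v) (hlen : u.length = k)
    (hub : ∀ x ∈ u, x < M) (hvb : ∀ x ∈ v, x < M) :
    IsUpDown (u ++ M :: v) := by
  have hk1 : 1 ≤ k := hk.pos
  intro i hi
  have hlen2 : (u ++ M :: v).length = k + 1 + v.length := by
    simp [hlen]; omega
  rw [hlen2] at hi
  rcases Nat.lt_trichotomy (i+1) k with hc | hc | hc
  · rw [getD_append_lt u _ (by omega), getD_append_lt u _ (by omega)]
    exact hu i (by omega)
  · -- i + 1 = k : ascent into M
    have hieven : Even i := by
      obtain ⟨t, rfl⟩ := hk; exact ⟨t, by omega⟩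
    have e1 : (u ++ M :: v).getD i 0 = u.getD i 0 := getD_append_lt u _ (by omega)
    have e2 : (u ++ M :: v).getD (i+1) 0 = M := by
      rw [getD_append_ge u _ (by omega) (by simp; omega), hlen, hc]
      simp
    constructor
    · intro _
      rw [e1, e2]
      exact hub _ (getD_mem (by omega))
    · intro hne; exact absurd hieven hne
  · rcases Nat.lt_or_ge i (k+1) with hc2 | hc2
    · -- i = k : descent from M
      have hik : i = k := by omega
      have hiodd : ¬ Even i := by
        rw [hik]; exact (Nat.not_even_iff_odd.symm).mp hk
      have e1 : (u ++ M :: v).getD i 0 = M := by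
        rw [getD_append_ge u _ (by omega) (by simp; omega), hlen, hik]
        simp
      have e2 : (u ++ M :: v).getD (i+1) 0 = v.getD 0 0 := by
        rw [getD_append_ge u _ (by omega) (by simp; omega), hlen]
        rw [show i + 1 - k = 1 by omega]
        rfl
      constructor
      · intro he; exact absurd he hiodd
      · intro _
        rw [e1, e2]
        exact hvb _ (getD_mem (by omega))
    · -- both in v
      have hj : i - (k+1) + 1 = i + 1 - (k+1) := by omega
      have e1 : (u ++ M :: v).getD i 0 = v.getD (i - (k+1)) 0 := by
        rw [getD_append_ge u _ (by omega) (by simp; omega), hlen]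
        rw [show i - k = (i - (k+1)) + 1 by omega]
        rfl
      have e2 : (u ++ M :: v).getD (i+1) 0 = v.getD (i - (k+1) + 1) 0 := by
        rw [getD_append_ge u _ (by omega) (by simp; omega), hlen, hj]
        rw [show i + 1 - k = (i + 1 - (k+1)) + 1 by omega]
        rfl
      have hpar : Even i ↔ Even (i - (k+1)) := by
        rw [show i = k + 1 + (i - (k+1)) by omega, even_shift hk]
        constructor <;> intro h <;> simpa using h
      have := hv (i - (k+1)) (by omega)
      rw [e1, e2]
      constructor
      · intro he; exact this.1 (hpar.mp he)
      · intro he; exact this.2 (fun hc => he (hpar.mpr hc))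

section decomp
variable {N : ℕ} {l : List ℤ}

lemma perm_nodup (hl : l.Perm (baseList (N+1))) : l.Nodup :=
  (hl.nodup_iff).mpr (baseList_nodup _)

lemma max_mem (hl : l.Perm (baseList (N+1))) : ((N:ℤ)+1) ∈ l := by
  rw [hl.mem_iff, mem_baseList]; push_cast; omega

lemma indexOf_max_lt (hl : l.Perm (baseList (N+1))) : l.idxOf ((N:ℤ)+1) < l.length :=
  List.idxOf_lt_length_iff.mpr (max_mem hl)

lemma elem_le (hl : l.Perm (baseList (N+1))) {x : ℤ} (hx : x ∈ l) : x ≤ (N:ℤ)+1 := by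
  have := (hl.mem_iff).mp hx
  rw [mem_baseList] at this
  push_cast at this; omega

lemma elem_lt_max (hl : l.Perm (baseList (N+1))) {j : ℕ} (hj : j < l.length)
    (hne : j ≠ l.idxOf ((N:ℤ)+1)) : l.getD j 0 < (N:ℤ)+1 := by
  have hk := indexOf_max_lt hl
  have hmem : l.getD j 0 ∈ l := getD_mem hj
  have hle := elem_le hl hmem
  rcases lt_or_eq_of_le hle with h | h
  · exact h
  · exfalso
    have e1 : l.getD j 0 = l[j] := List.getD_eq_getElem _ _ hj
    have e2 : l[l.idxOf ((N:ℤ)+1)] = (N:ℤ)+1 := List.getElem_idxOf hk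
    have : l[j] = l[l.idxOf ((N:ℤ)+1)] := by rw [e2, ← e1, h]
    exact hne ((List.Nodup.getElem_inj_iff (perm_nodup hl)).mp this)

/-- the position of the maximum in an up-down permutation of odd length is odd -/
lemma indexOf_max_odd (hN : Even N) (hN1 : 1 ≤ N) (hl : l.Perm (baseList (N+1)))
    (hud : IsUpDown l) : Odd (l.idxOf ((N:ℤ)+1)) := by
  set k := l.idxOf ((N:ℤ)+1) with hkdef
  have hklt : k < l.length := indexOf_max_lt hl
  have hlen : l.length = N + 1 := by rw [hl.length_eq, baseList_length]
  have hgk : l.getD k 0 = (N:ℤ)+1 := by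
    rw [List.getD_eq_getElem _ _ hklt]; exact List.getElem_idxOf hklt
  rw [Nat.odd_iff]
  by_contra hkodd
  have hke : Even k := Nat.even_iff.mpr (by omega)
  have hkN : k ≤ N := by omega
  rcases lt_or_eq_of_le hkN with hc | hc
  · have h1 := (hud k (by omega)).1 hke
    have h2 : l.getD (k+1) 0 < (N:ℤ)+1 := elem_lt_max hl (by omega) (by omega)
    rw [hgk] at h1; omega
  · have hodd : ¬ Even (N-1) := by
      intro ⟨r, hr⟩
      obtain ⟨t, ht⟩ := hN
      omega
    have h1 := (hud (N-1) (by omega)).2 hodd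
    rw [show N - 1 + 1 = N by omega] at h1
    have h2 : l.getD (N-1) 0 < (N:ℤ)+1 := elem_lt_max hl (by omega) (by omega)
    have hgN : l.getD N 0 = (N:ℤ)+1 := hc ▸ hgk
    rw [hgN] at h1
    omega

end decomp

lemma nodup_perm_sort {u : List ℤ} (hu : u.Nodup) : u.Perm ((u.toFinset).sort (·≤·)) :=
  List.perm_of_nodup_nodup_toFinset_eq hu (Finset.sort_nodup _ _)
    (by rw [Finset.sort_toFinset])

section decomp2
variable {N k : ℕ} {l : List ℤ}

lemma decomp_eq (hl : l.Perm (baseList (N+1))) (hk : l.idxOf ((N:ℤ)+1) = k) :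
    l = l.take k ++ ((N:ℤ)+1) :: l.drop (k+1) := by
  have hklt : k < l.length := hk ▸ indexOf_max_lt hl
  have hget : l[k]'hklt = ((N:ℤ)+1) := by
    subst hk; exact List.getElem_idxOf hklt
  conv_lhs => rw [← List.take_append_drop k l, List.drop_eq_getElem_cons hklt, hget]

lemma take_nodup (hl : l.Perm (baseList (N+1))) : (l.take k).Nodup :=
  (List.take_sublist k l).nodup (perm_nodup hl)

lemma drop_nodup (hl : l.Perm (baseList (N+1))) : (l.drop (k+1)).Nodup :=
  (List.drop_sublist (k+1) l).nodup (perm_nodup hl)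

lemma take_length_eq (hl : l.Perm (baseList (N+1))) (hk : l.idxOf ((N:ℤ)+1) = k) :
    (l.take k).length = k := by
  have hklt : k < l.length := hk ▸ indexOf_max_lt hl
  rw [List.length_take]; omega

lemma take_card (hl : l.Perm (baseList (N+1))) (hk : l.idxOf ((N:ℤ)+1) = k) :
    (l.take k).toFinset.card = k := by
  rw [List.toFinset_card_of_nodup (take_nodup hl), take_length_eq hl hk]

lemma take_subset (hl : l.Perm (baseList (N+1))) (hk : l.idxOf ((N:ℤ)+1) = k) :
    (l.take k).toFinset ⊆ (baseList N).toFinset := by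
  intro x hx
  rw [List.mem_toFinset] at hx ⊢
  have hxl : x ∈ l := (List.take_sublist k l).mem hx
  have hle : x ≤ (N:ℤ)+1 := elem_le hl hxl
  have h1 : (1:ℤ) ≤ x := by
    have := (hl.mem_iff).mp hxl; rw [mem_baseList] at this; exact this.1
  have hne : x ≠ (N:ℤ)+1 := by
    intro hEq; subst hEq
    exact not_mem_take_indexOf l _ (hk ▸ hx)
  rw [mem_baseList]
  omega

lemma drop_toFinset_eq (hl : l.Perm (baseList (N+1))) (hk : l.idxOf ((N:ℤ)+1) = k) :
    (l.drop (k+1)).toFinset = (baseList N).toFinset \ (l.take k).toFinset := by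
  have hdec := decomp_eq hl hk
  have hnd : (l.take k ++ ((N:ℤ)+1) :: l.drop (k+1)).Nodup := hdec ▸ perm_nodup hl
  rw [List.nodup_append] at hnd
  obtain ⟨hnd1, hnd2, hdisj⟩ := hnd
  have hMv : ((N:ℤ)+1) ∉ l.drop (k+1) := (List.nodup_cons.mp hnd2).1
  ext x
  simp only [List.mem_toFinset, Finset.mem_sdiff, mem_baseList]
  constructor
  · intro hx
    have hxl : x ∈ l := (List.drop_sublist (k+1) l).mem hx
    have hle : x ≤ (N:ℤ)+1 := elem_le hl hxl
    have h1 : (1:ℤ) ≤ x := by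
      have := (hl.mem_iff).mp hxl; rw [mem_baseList] at this; exact this.1
    have hne : x ≠ (N:ℤ)+1 := fun hEq => hMv (hEq ▸ hx)
    refine ⟨⟨h1, by omega⟩, fun hxt => ?_⟩
    exact hdisj x hxt x (List.mem_cons_of_mem _ hx) rfl
  · rintro ⟨⟨h1, h2⟩, hxS⟩
    have hxl : x ∈ l := by
      rw [hl.mem_iff, mem_baseList]; push_cast; omega
    rw [hdec, List.mem_append, List.mem_cons] at hxl
    rcases hxl with h | h | h
    · exact absurd h hxS
    · omega
    · exact h

lemma elems_lt_of_subset {S : Finset ℤ} (hS : S ⊆ (baseList N).toFinset) {u : List ℤ}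
    (hu : u.Perm (S.sort (·≤·))) : ∀ x ∈ u, x < (N:ℤ)+1 := by
  intro x hx
  have : x ∈ S := by
    have := (hu.mem_iff).mp hx
    rwa [Finset.mem_sort] at this
  have := hS this
  rw [List.mem_toFinset, mem_baseList] at this
  omega

lemma append_perm {S : Finset ℤ} (hS : S ⊆ (baseList N).toFinset) {u v : List ℤ}
    (hu : u.Perm (S.sort (·≤·))) (hv : v.Perm (((baseList N).toFinset \ S).sort (·≤·))) :
    (u ++ ((N:ℤ)+1) :: v).Perm (baseList (N+1)) := by
  have huS : u.toFinset = S := by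
    rw [List.toFinset_eq_of_perm _ _ hu, Finset.sort_toFinset]
  have hvS : v.toFinset = (baseList N).toFinset \ S := by
    rw [List.toFinset_eq_of_perm _ _ hv, Finset.sort_toFinset]
  have hub := elems_lt_of_subset hS hu
  have hvb := elems_lt_of_subset (Finset.sdiff_subset) hv
  apply List.perm_of_nodup_nodup_toFinset_eq ?_ (baseList_nodup _) ?_
  · rw [List.nodup_append]
    refine ⟨hu.nodup_iff.mpr (Finset.sort_nodup _ _), ?_, ?_⟩
    · rw [List.nodup_cons]
      exact ⟨fun h => absurd (hvb _ h) (by omega), hv.nodup_iff.mpr (Finset.sort_nodup _ _)⟩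
    · intro x hxu y hxv hxy; subst hxy
      rcases List.mem_cons.mp hxv with h | h
      · exact absurd (h ▸ hub x hxu) (by omega)
      · have h1 : x ∈ S := huS ▸ List.mem_toFinset.mpr hxu
        have h2 : x ∈ (baseList N).toFinset \ S := hvS ▸ List.mem_toFinset.mpr h
        exact (Finset.mem_sdiff.mp h2).2 h1
  · rw [List.toFinset_append, List.toFinset_cons, huS, hvS, toFinset_baseList_succ,
      Finset.union_insert, Finset.union_sdiff_of_subset hS]

end decomp2

lemma fiber_card (N k : ℕ) (hN : Even N) (hN1 : 1 ≤ N) (hko : Odd k)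
    (S : Finset ℤ) (hS : S ⊆ (baseList N).toFinset) (hScard : S.card = k) :
    ((udFinset (baseList (N+1))).filter
      (fun l => l.idxOf ((N:ℤ)+1) = k ∧ (l.take k).toFinset = S)).card
      = eulerNum k * eulerNum (N-k) := by
  classical
  set M : ℤ := (N:ℤ)+1 with hM
  set Sc : Finset ℤ := (baseList N).toFinset \ S with hSc
  have hcardN : (baseList N).toFinset.card = N := by
    rw [List.toFinset_card_of_nodup (baseList_nodup N), baseList_length]
  have hSccard : Sc.card = N - k := by
    rw [hSc, Finset.card_sdiff_of_subset hS, hcardN, hScard]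
  have hkN : k ≤ N := by
    rw [← hScard, ← hcardN]; exact Finset.card_le_card hS
  have h1 : (udFinset (S.sort (·≤·))).card = eulerNum k := by
    rw [card_udFinset_sorted (Finset.sortedLT_sort S).pairwise, Finset.length_sort, hScard]
  have h2 : (udFinset (Sc.sort (·≤·))).card = eulerNum (N-k) := by
    rw [card_udFinset_sorted (Finset.sortedLT_sort Sc).pairwise, Finset.length_sort, hSccard]
  rw [← h1, ← h2, ← Finset.card_product]
  apply Finset.card_bij' (fun l _ => (l.take k, l.drop (k+1)))
    (fun p _ => p.1 ++ M :: p.2)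
  · -- hi
    intro l hl
    rw [Finset.mem_filter, mem_udFinset] at hl
    obtain ⟨⟨hperm, hud⟩, hkEq, hSEq⟩ := hl
    rw [Finset.mem_product, mem_udFinset, mem_udFinset]
    refine ⟨⟨?_, isUpDown_take hud k⟩, ?_, isUpDown_drop_odd hud hko⟩
    · have := nodup_perm_sort (take_nodup hperm (k := k))
      rwa [hSEq] at this
    · have := nodup_perm_sort (drop_nodup hperm (k := k))
      rwa [drop_toFinset_eq hperm hkEq, hSEq] at this
  · -- hj
    rintro ⟨u, v⟩ hp
    rw [Finset.mem_product, mem_udFinset, mem_udFinset] at hp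
    obtain ⟨⟨hup, huud⟩, hvp, hvud⟩ := hp
    have hub := elems_lt_of_subset hS hup
    have hvb := elems_lt_of_subset (Finset.sdiff_subset) hvp
    have hulen : u.length = k := by
      rw [hup.length_eq, Finset.length_sort, hScard]
    have hMu : M ∉ u := fun h => absurd (hub _ h) (by omega)
    have hidx : (u ++ M :: v).idxOf M = k := by
      rw [List.idxOf_append_of_notMem hMu, List.idxOf_cons_self, hulen]; omega
    rw [Finset.mem_filter, mem_udFinset]
    refine ⟨⟨append_perm hS hup hvp, ?_⟩, hidx, ?_⟩
    · exact isUpDown_append hko huud hvud hulen hub hvb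
    · rw [← hulen, List.take_left, List.toFinset_eq_of_perm _ _ hup, Finset.sort_toFinset]
  · -- left_inv
    intro l hl
    rw [Finset.mem_filter, mem_udFinset] at hl
    exact (decomp_eq hl.1.1 hl.2.1).symm
  · -- right_inv
    rintro ⟨u, v⟩ hp
    rw [Finset.mem_product, mem_udFinset, mem_udFinset] at hp
    have hulen : u.length = k := by
      rw [hp.1.1.length_eq, Finset.length_sort, hScard]
    have e1 : (u ++ M :: v).take k = u := by
      rw [← hulen, List.take_left]
    have e2 : (u ++ M :: v).drop (k+1) = v := by
      rw [show u ++ M :: v = (u ++ [M]) ++ v by simp]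
      exact List.drop_left' (by rw [List.length_append, hulen]; rfl)
    rw [e1, e2]

lemma euler_rec_aux (N : ℕ) (hN : Even N) (hN1 : 1 ≤ N) :
    eulerNum (N+1) = ∑ k ∈ Finset.range (N+1),
      if Odd k then N.choose k * (eulerNum k * eulerNum (N-k)) else 0 := by
  classical
  rw [eulerNum_eq_card]
  set M : ℤ := (N:ℤ)+1 with hM
  set T := udFinset (baseList (N+1)) with hT
  have hmap : ∀ l ∈ T, (l.idxOf M, (l.take (l.idxOf M)).toFinset)
      ∈ (Finset.range (N+1)) ×ˢ (baseList N).toFinset.powerset := by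
    intro l hl
    rw [mem_udFinset] at hl
    rw [Finset.mem_product, Finset.mem_range, Finset.mem_powerset]
    constructor
    · have := indexOf_max_lt hl.1
      rw [hl.1.length_eq, baseList_length] at this
      exact this
    · exact take_subset hl.1 rfl
  rw [Finset.card_eq_sum_card_fiberwise hmap, Finset.sum_product]
  apply Finset.sum_congr rfl
  intro k hk
  rw [Finset.mem_range] at hk
  have hfilter : ∀ S : Finset ℤ, (T.filter fun l =>
        (l.idxOf M, (l.take (l.idxOf M)).toFinset) = (k, S))
      = (T.filter fun l => l.idxOf M = k ∧ (l.take k).toFinset = S) := by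
    intro S
    apply Finset.filter_congr
    intro l _
    rw [Prod.mk.injEq]
    constructor
    · rintro ⟨h1, h2⟩; exact ⟨h1, by rw [← h1]; exact h2⟩
    · rintro ⟨h1, h2⟩; exact ⟨h1, by rw [h1]; exact h2⟩
  by_cases hko : Odd k
  · rw [if_pos hko]
    have hterm : ∀ S ∈ (baseList N).toFinset.powerset,
        (T.filter fun l =>
          (l.idxOf M, (l.take (l.idxOf M)).toFinset) = (k, S)).card
        = if S.card = k then eulerNum k * eulerNum (N-k) else 0 := by
      intro S hS
      rw [Finset.mem_powerset] at hS
      rw [hfilter S]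
      by_cases hc : S.card = k
      · rw [if_pos hc]
        exact fiber_card N k hN hN1 hko S hS hc
      · rw [if_neg hc, Finset.card_eq_zero, Finset.filter_eq_empty_iff]
        rintro l hl ⟨h1, h2⟩
        rw [hT, mem_udFinset] at hl
        exact hc (by rw [← h2]; exact take_card hl.1 h1)
    rw [Finset.sum_congr rfl hterm, ← Finset.sum_filter,
      ← Finset.powersetCard_eq_filter, Finset.sum_const, Finset.card_powersetCard,
      List.toFinset_card_of_nodup (baseList_nodup N), baseList_length, smul_eq_mul]
  · rw [if_neg hko]
    apply Finset.sum_eq_zero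
    intro S hS
    rw [hfilter S, Finset.card_eq_zero, Finset.filter_eq_empty_iff]
    rintro l hl ⟨h1, _⟩
    rw [hT, mem_udFinset] at hl
    exact hko (h1 ▸ indexOf_max_odd hN hN1 hl.1 hl.2)

lemma eulerNum_one : eulerNum 1 = 1 := by
  rw [eulerNum_eq_card]
  have : udFinset (baseList 1) = {baseList 1} := by
    ext l
    rw [mem_udFinset, Finset.mem_singleton]
    constructor
    · intro ⟨hp, _⟩
      have h1 : (baseList 1).length = 1 := baseList_length 1
      rcases List.length_eq_one_iff.mp h1 with ⟨a, ha⟩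
      rw [ha] at hp ⊢
      exact List.perm_singleton.mp hp
    · intro h
      subst h
      refine ⟨List.Perm.refl _, ?_⟩
      intro i hi
      rw [baseList_length] at hi
      omega
  rw [this, Finset.card_singleton]

lemma euler_rec (n : ℕ) (hn : 2 ≤ n) :
    eulerNum (2*n-1) = ∑ i ∈ Finset.Icc 1 (n-1),
      (2*n-2).choose (2*i-1) * (eulerNum (2*i-1) * eulerNum (2*(n-i)-1)) := by
  have hN : 2*n-1 = (2*n-2) + 1 := by omega
  rw [hN, euler_rec_aux (2*n-2) ⟨n-1, by omega⟩ (by omega), ← Finset.sum_filter]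
  apply Finset.sum_bij' (i := fun k _ => (k+1)/2) (j := fun i _ => 2*i-1)
  case hi =>
    intro k hk
    rw [Finset.mem_filter, Finset.mem_range] at hk
    rw [Finset.mem_Icc]
    obtain ⟨t, ht⟩ := hk.2
    omega
  case hj =>
    intro i hi
    rw [Finset.mem_Icc] at hi
    rw [Finset.mem_filter, Finset.mem_range]
    exact ⟨by omega, ⟨i-1, by omega⟩⟩
  case left_neg =>
    intro k hk
    rw [Finset.mem_filter, Finset.mem_range] at hk
    obtain ⟨t, ht⟩ := hk.2
    omega
  case right_neg =>
    intro i hi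
    rw [Finset.mem_Icc] at hi
    omega
  case h =>
    intro k hk
    rw [Finset.mem_filter, Finset.mem_range] at hk
    obtain ⟨t, ht⟩ := hk.2
    have e1 : 2 * ((k+1)/2) - 1 = k := by omega
    have e2 : 2 * (n - (k+1)/2) - 1 = 2*n-2 - k := by omega
    rw [e1, e2]

lemma cast_factorial_succ (m : ℕ) : ((m+1).factorial : ℚ) = ((m:ℚ)+1) * (m.factorial : ℚ) := by
  rw [Nat.factorial_succ]; push_cast; ring

lemma fact_ne (m : ℕ) : ((m.factorial : ℚ)) ≠ 0 :=
  Nat.cast_ne_zero.mpr (Nat.factorial_ne_zero m)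

lemma choose_cast_eq (a b : ℕ) :
    ((a+b).choose a : ℚ) = ((a+b).factorial : ℚ) / ((a.factorial : ℚ) * (b.factorial : ℚ)) := by
  rw [eq_div_iff (by positivity), Nat.choose_symm_add, ← mul_assoc]
  exact_mod_cast congrArg (Nat.cast : ℕ → ℚ) (Nat.add_choose_mul_factorial_mul_factorial a b)

lemma term_eq (a b : ℕ) (Ea Eb : ℚ) :
    ((3*a+3*b+4).choose (3*a+2) : ℚ) *
      ((3*(a:ℚ)+2) * (((3*a+1).factorial :ℚ) * Ea / (((2*a+1).factorial :ℚ) * 2^(2*a))) / 2) *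
      ((3*(b:ℚ)+2) * (((3*b+1).factorial :ℚ) * Eb / (((2*b+1).factorial :ℚ) * 2^(2*b))) / 2)
    = (((3*a+3*b+4).factorial :ℚ) / (((2*a+2*b+2).factorial :ℚ) * 2^(2*a+2*b+2))) *
      (((2*a+2*b+2).choose (2*a+1) :ℚ) * (Ea * Eb)) := by
  have e1 : ((3*a+3*b+4).choose (3*a+2) : ℚ)
      = ((3*a+3*b+4).factorial : ℚ) / (((3*a+2).factorial : ℚ) * ((3*b+2).factorial : ℚ)) := by
    have := choose_cast_eq (3*a+2) (3*b+2)
    rw [show 3*a+2 + (3*b+2) = 3*a+3*b+4 by ring] at this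
    exact this
  have e2 : ((2*a+2*b+2).choose (2*a+1) : ℚ)
      = ((2*a+2*b+2).factorial : ℚ) / (((2*a+1).factorial : ℚ) * ((2*b+1).factorial : ℚ)) := by
    have := choose_cast_eq (2*a+1) (2*b+1)
    rw [show 2*a+1 + (2*b+1) = 2*a+2*b+2 by ring] at this
    exact this
  have f1 : ((3*a+2).factorial : ℚ) = (3*(a:ℚ)+2) * ((3*a+1).factorial : ℚ) := by
    rw [show 3*a+2 = (3*a+1)+1 by ring, cast_factorial_succ]; push_cast; ring
  have f2 : ((3*b+2).factorial : ℚ) = (3*(b:ℚ)+2) * ((3*b+1).factorial : ℚ) := by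
    rw [show 3*b+2 = (3*b+1)+1 by ring, cast_factorial_succ]; push_cast; ring
  have p1 : (2:ℚ)^(2*a+2*b+2) = 2^(2*a) * 2^(2*b) * 4 := by
    rw [pow_add, pow_add]; norm_num
  rw [e1, e2, f1, f2, p1]
  have h3a := fact_ne (3*a+1)
  have h3b := fact_ne (3*b+1)
  have h2a := fact_ne (2*a+1)
  have h2b := fact_ne (2*b+1)
  have hfa : (3*(a:ℚ)+2) ≠ 0 := by positivity
  have hfb : (3*(b:ℚ)+2) ≠ 0 := by positivity
  have hp2a : (2:ℚ)^(2*a) ≠ 0 := by positivity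
  have hp2b : (2:ℚ)^(2*b) ≠ 0 := by positivity
  field_simp
  ring

/-- The recursion for f_n = f^{σ_{3n-2}} determines f_n = (3n-2)! E_{2n-1} / ((2n-1)! 2^{2n-2}). -/
theorem sigma_count (f : ℕ → ℚ) (h1 : f 1 = 1)
    (hrec : ∀ n : ℕ, 2 ≤ n →
      f n = (1 / (2 * (n : ℚ) - 1)) *
        ∑ i ∈ Finset.Icc 1 (n - 1), (Nat.choose (3 * n - 2) (3 * i - 1) : ℚ) *
          ((3 * (i : ℚ) - 1) * f i / 2) * ((3 * ((n : ℚ) - (i : ℚ)) - 1) * f (n - i) / 2)) :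
    ∀ n : ℕ, 1 ≤ n →
      f n = ((3 * n - 2).factorial : ℚ) * (eulerNum (2 * n - 1) : ℚ) /
        (((2 * n - 1).factorial : ℚ) * 2 ^ (2 * n - 2)) := by

  intro n
  induction n using Nat.strong_induction_on with
  | _ n ih =>
    intro hn
    rcases eq_or_lt_of_le hn with heq | hlt
    · subst heq
      rw [h1]
      norm_num [eulerNum_one, Nat.factorial]
    · have hn2 : 2 ≤ n := hlt
      rw [hrec n hn2]
      have hsum : ∀ i ∈ Finset.Icc 1 (n-1),
          (Nat.choose (3*n-2) (3*i-1) : ℚ) * ((3*(i:ℚ)-1) * f i / 2) *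
            ((3*((n:ℚ)-(i:ℚ))-1) * f (n-i) / 2)
          = (((3*n-2).factorial :ℚ) / (((2*n-2).factorial :ℚ) * 2^(2*n-2))) *
            (((2*n-2).choose (2*i-1) : ℚ) *
              ((eulerNum (2*i-1) : ℚ) * (eulerNum (2*(n-i)-1) : ℚ))) := by
        intro i hi
        rw [Finset.mem_Icc] at hi
        obtain ⟨hi1, hi2⟩ := hi
        obtain ⟨a, hia⟩ : ∃ a, i = a + 1 := ⟨i - 1, by omega⟩
        obtain ⟨b, hnib⟩ : ∃ b, n - i = b + 1 := ⟨n - i - 1, by omega⟩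
        have hnab : n = a + b + 2 := by omega
        rw [ih i (by omega) (by omega), ih (n-i) (by omega) (by omega)]
        rw [hnib, hia, hnab]
        rw [show 3*(a+b+2)-2 = 3*a+3*b+4 by omega, show 3*(a+1)-1 = 3*a+2 by omega,
          show 3*(a+1)-2 = 3*a+1 by omega, show 2*(a+1)-1 = 2*a+1 by omega,
          show 2*(a+1)-2 = 2*a by omega, show 3*(b+1)-2 = 3*b+1 by omega,
          show 2*(b+1)-1 = 2*b+1 by omega, show 2*(b+1)-2 = 2*b by omega,
          show 2*(a+b+2)-2 = 2*a+2*b+2 by omega]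
        push_cast
        linear_combination term_eq a b ((eulerNum (2*a+1) : ℚ)) ((eulerNum (2*b+1) : ℚ))
      rw [Finset.sum_congr rfl hsum, ← Finset.mul_sum]
      have hE : ((eulerNum (2*n-1) : ℕ) : ℚ) = ∑ i ∈ Finset.Icc 1 (n-1),
          (((2*n-2).choose (2*i-1) : ℚ) *
            ((eulerNum (2*i-1):ℚ) * (eulerNum (2*(n-i)-1):ℚ))) := by
        rw [euler_rec n hn2]
        push_cast
        rfl
      rw [← hE]
      have hfact : ((2*n-1).factorial : ℚ) = (2*(n:ℚ)-1) * ((2*n-2).factorial : ℚ) := by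
        rw [show 2*n-1 = (2*n-2)+1 by omega, cast_factorial_succ,
          Nat.cast_sub (show 2 ≤ 2*n by omega)]
        push_cast
        ring
      have hcn : (2:ℚ) ≤ (n:ℚ) := by exact_mod_cast hn2
      have h2n1 : (2*(n:ℚ)-1) ≠ 0 := by intro h; linarith
      rw [hfact]
      have hf2 := fact_ne (2*n-2)
      have hp : (2:ℚ)^(2*n-2) ≠ 0 := by positivity
      field_simp
      try ring
      try exact Or.inl trivial
end

section
/- Define t_1 = 2 and, for n \ge 2, t_n = (1/(2n+1)) \sum_{i=1}^{n-1} \binom{3n}{3i} t_i t_{n-i}. Then t_n = (3n)! E_{2n-1} / ((2n-1)!(2^{2n}-1)) for all n \ge 1, where E_{2n-1} are the tangent numbers. -/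
open scoped BigOperators

namespace TauAux

lemma baseList_eq (m : ℕ) : baseList m = (List.range m).map (fun k : ℕ => (k : ℤ) + 1) := by
  rw [baseList]
  simp only [List.bind_eq_flatMap, List.pure_def]
  rw [← List.map_eq_flatMap, List.map_map]
  rfl

instance : DecidablePred IsUpDown := fun l =>
  decidable_of_iff (∀ i : ℕ, (_ : i < l.length) → i + 1 < l.length →
    (Even i → l.getD i 0 < l.getD (i + 1) 0) ∧ (¬ Even i → l.getD (i + 1) 0 < l.getD i 0))
    (by constructor
        · intro h i hi; exact h i (by omega) hi
        · intro h i _ hi; exact h i hi)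

/-- reformulate IsUpDown with getElem -/
lemma isUpDown_iff (l : List ℤ) : IsUpDown l ↔
    ∀ i : ℕ, (h : i + 1 < l.length) →
      (Even i → l[i]'(by omega) < l[i+1]'h) ∧ (¬ Even i → l[i+1]'h < l[i]'(by omega)) := by
  unfold IsUpDown
  constructor <;> intro h i hi <;>
    · have := h i hi
      rw [List.getD_eq_getElem l 0 (show i < l.length by omega),
        List.getD_eq_getElem l 0 hi] at *
      exact this

lemma mem_baseList {m : ℕ} {x : ℤ} : x ∈ baseList m ↔ 1 ≤ x ∧ x ≤ m := by
  rw [baseList_eq]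
  simp only [List.mem_map, List.mem_range]
  constructor
  · rintro ⟨k, hk, rfl⟩; omega
  · intro ⟨h1, h2⟩
    exact ⟨(x - 1).toNat, by omega, by omega⟩

lemma length_baseList (m : ℕ) : (baseList m).length = m := by
  rw [baseList_eq, List.length_map, List.length_range]

lemma nodup_baseList (m : ℕ) : (baseList m).Nodup := by
  rw [baseList_eq]
  exact (List.nodup_range (n := m)).map (fun a b h => by exact_mod_cast add_right_cancel h)

lemma sorted_baseList (m : ℕ) : List.Pairwise (· < ·) (baseList m) := by
  rw [List.pairwise_iff_getElem]
  intro i j hi hj hij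
  have hi' : i < m := by rwa [length_baseList] at hi
  have hj' : j < m := by rwa [length_baseList] at hj
  have : ∀ (k : ℕ) (hk : k < (baseList m).length), (baseList m)[k] = (k : ℤ) + 1 := by
    intro k hk
    have hk' : k < m := by rwa [length_baseList] at hk
    simp [baseList_eq]
  rw [this i hi, this j hj]
  omega

/-- the finset of up-down arrangements of a list -/
def arr (w : List ℤ) : Finset (List ℤ) := w.permutations.toFinset.filter IsUpDown

lemma mem_arr {w l : List ℤ} : l ∈ arr w ↔ l.Perm w ∧ IsUpDown l := by
  simp only [arr, Finset.mem_filter, List.mem_toFinset, List.mem_permutations]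

lemma eulerNum_eq_card_arr (m : ℕ) : eulerNum m = (arr (baseList m)).card := by
  rw [eulerNum, ← Nat.card_eq_finsetCard]
  exact Nat.card_congr (Equiv.subtypeEquivRight (fun l => mem_arr.symm))

lemma baseList_one : baseList 1 = [1] := by
  rw [baseList_eq, List.range_succ]; norm_num

lemma eulerNum_one : eulerNum 1 = 1 := by
  rw [eulerNum_eq_card_arr, baseList_one]
  have : arr [1] = {[1]} := by
    ext l
    rw [mem_arr, Finset.mem_singleton, List.perm_singleton]
    constructor
    · exact fun h => h.1
    · rintro rfl
      exact ⟨rfl, fun i hi => by simp at hi⟩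
  rw [this, Finset.card_singleton]

end TauAux

namespace TauAux

lemma updown_map {φ : ℤ → ℤ} {l : List ℤ}
    (hmono : ∀ a ∈ l, ∀ b ∈ l, a < b → φ a < φ b) (h : IsUpDown l) :
    IsUpDown (l.map φ) := by
  rw [isUpDown_iff] at h ⊢
  intro i hi
  rw [List.length_map] at hi
  have h1 : i < l.length := by omega
  have := h i hi
  simp only [List.getElem_map]
  constructor
  · intro he
    exact hmono _ (List.getElem_mem h1) _ (List.getElem_mem hi) (this.1 he)
  · intro he
    exact hmono _ (List.getElem_mem hi) _ (List.getElem_mem h1) (this.2 he)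

lemma sorted_getElem_lt {v : List ℤ} (hv : List.Pairwise (· < ·) v) {i j : ℕ}
    (hi : i < v.length) (hj : j < v.length) (hij : i < j) : v[i] < v[j] := by
  rw [List.pairwise_iff_getElem] at hv
  exact hv i j hi hj hij

lemma card_arr_eq (v : List ℤ) (hv : List.Pairwise (· < ·) v) :
    (arr v).card = eulerNum v.length := by
  classical
  set n := v.length with hn
  have hvnd : v.Nodup := hv.nodup
  rw [eulerNum_eq_card_arr]
  set u := baseList n with hu
  set g : ℤ → ℤ := fun y => (v.idxOf y : ℤ) + 1 with hg
  set f : ℤ → ℤ := fun x => v.getD (x - 1).toNat 0 with hf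
  -- basic facts
  have hfx : ∀ x : ℤ, 1 ≤ x → x ≤ n → ∃ (h : (x-1).toNat < v.length),
      f x = v[(x-1).toNat] := by
    intro x h1 h2
    have h : (x-1).toNat < v.length := by omega
    exact ⟨h, List.getD_eq_getElem v 0 h⟩
  have hgf : ∀ x ∈ u, g (f x) = x := by
    intro x hx
    rw [hu, mem_baseList] at hx
    obtain ⟨h, hfe⟩ := hfx x hx.1 hx.2
    rw [hfe, hg]
    simp only
    rw [hvnd.idxOf_getElem _ h]
    omega
  have hfg : ∀ y ∈ v, f (g y) = y := by
    intro y hy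
    have hidx : v.idxOf y < v.length := List.idxOf_lt_length_iff.2 hy
    have : ((v.idxOf y : ℤ) + 1 - 1).toNat = v.idxOf y := by omega
    rw [hg, hf]
    simp only [this]
    rw [List.getD_eq_getElem v 0 hidx, List.getElem_idxOf hidx]
  have hgmem : ∀ y ∈ v, g y ∈ u := by
    intro y hy
    have hidx : v.idxOf y < v.length := List.idxOf_lt_length_iff.2 hy
    rw [hu, mem_baseList, hg]
    constructor <;> simp only <;> omega
  have hfmem : ∀ x ∈ u, f x ∈ v := by
    intro x hx
    rw [hu, mem_baseList] at hx
    obtain ⟨h, hfe⟩ := hfx x hx.1 hx.2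
    rw [hfe]
    exact List.getElem_mem h
  have hgmono : ∀ a ∈ v, ∀ b ∈ v, a < b → g a < g b := by
    intro a ha b hb hab
    have hia : v.idxOf a < v.length := List.idxOf_lt_length_iff.2 ha
    have hib : v.idxOf b < v.length := List.idxOf_lt_length_iff.2 hb
    have : v.idxOf a < v.idxOf b := by
      by_contra hcon
      push_neg at hcon
      rcases Nat.lt_or_ge (v.idxOf b) (v.idxOf a) with h' | h'
      · have := sorted_getElem_lt hv hib hia h'
        rw [List.getElem_idxOf hia, List.getElem_idxOf hib] at this
        omega
      · have : v.idxOf a = v.idxOf b := by omega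
        have := congrArg (fun i => v.getD i 0) this
        simp only [List.getD_eq_getElem v 0 hia, List.getD_eq_getElem v 0 hib] at this
        rw [List.getElem_idxOf hia, List.getElem_idxOf hib] at this
        omega
    rw [hg]; simp only; omega
  have hfmono : ∀ a ∈ u, ∀ b ∈ u, a < b → f a < f b := by
    intro a ha b hb hab
    rw [hu, mem_baseList] at ha hb
    obtain ⟨h1, he1⟩ := hfx a ha.1 ha.2
    obtain ⟨h2, he2⟩ := hfx b hb.1 hb.2
    rw [he1, he2]
    exact sorted_getElem_lt hv h1 h2 (by omega)
  have hmapgv : v.map g = u := by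
    have hnd : (v.map g).Nodup := by
      refine hvnd.map_on ?_
      intro x hx y hy hxy
      rcases lt_trichotomy x y with h | h | h
      · exact absurd hxy (ne_of_lt (hgmono x hx y hy h))
      · exact h
      · exact absurd hxy.symm (ne_of_lt (hgmono y hy x hx h))
    have hsort : List.Pairwise (· < ·) (v.map g) := by
      rw [List.pairwise_map]
      exact hv.imp_of_mem (fun {a b} ha hb hab => hgmono a ha b hb hab)
    have hperm : (v.map g).Perm u := by
      rw [List.perm_ext_iff_of_nodup hnd (nodup_baseList n)]
      intro a
      constructor
      · intro ha
        obtain ⟨y, hy, rfl⟩ := List.mem_map.1 ha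
        exact hgmem y hy
      · intro ha
        rw [← hgf a ha]
        exact List.mem_map_of_mem (f := g) (hfmem a ha)
    exact hperm.eq_of_pairwise' hsort (sorted_baseList n)
  have hmapfu : u.map f = v := by
    have hnd : (u.map f).Nodup := by
      refine (nodup_baseList n).map_on ?_
      intro x hx y hy hxy
      rcases lt_trichotomy x y with h | h | h
      · exact absurd hxy (ne_of_lt (hfmono x hx y hy h))
      · exact h
      · exact absurd hxy.symm (ne_of_lt (hfmono y hy x hx h))
    have hsort : List.Pairwise (· < ·) (u.map f) := by
      rw [List.pairwise_map]
      exact (sorted_baseList n).imp_of_mem (fun {a b} ha hb hab => hfmono a ha b hb hab)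
    have hperm : (u.map f).Perm v := by
      rw [List.perm_ext_iff_of_nodup hnd hvnd]
      intro a
      constructor
      · intro ha
        obtain ⟨y, hy, rfl⟩ := List.mem_map.1 ha
        exact hfmem y hy
      · intro ha
        rw [← hfg a ha]
        exact List.mem_map_of_mem (f := f) (hgmem a ha)
    exact hperm.eq_of_pairwise' hsort hv
  -- the bijection
  refine Finset.card_bij' (fun l _ => l.map g) (fun l _ => l.map f) ?_ ?_ ?_ ?_
  · intro l hl
    rw [mem_arr] at hl ⊢
    have hsub : ∀ y ∈ l, y ∈ v := fun y hy => hl.1.mem_iff.1 hy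
    constructor
    · rw [← hmapgv]
      exact hl.1.map g
    · exact updown_map (fun a ha b hb => hgmono a (hsub a ha) b (hsub b hb)) hl.2
  · intro l hl
    rw [mem_arr] at hl ⊢
    have hsub : ∀ y ∈ l, y ∈ u := fun y hy => hl.1.mem_iff.1 hy
    constructor
    · rw [← hmapfu]
      exact hl.1.map f
    · exact updown_map (fun a ha b hb => hfmono a (hsub a ha) b (hsub b hb)) hl.2
  · intro l hl
    rw [mem_arr] at hl
    have hsub : ∀ y ∈ l, y ∈ v := fun y hy => hl.1.mem_iff.1 hy
    show List.map f (List.map g l) = l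
    rw [List.map_map]
    have : ∀ y ∈ l, (f ∘ g) y = id y := fun y hy => hfg y (hsub y hy)
    rw [List.map_congr_left this, List.map_id]
  · intro l hl
    rw [mem_arr] at hl
    have hsub : ∀ y ∈ l, y ∈ u := fun y hy => hl.1.mem_iff.1 hy
    show List.map g (List.map f l) = l
    rw [List.map_map]
    have : ∀ y ∈ l, (g ∘ f) y = id y := fun y hy => hgf y (hsub y hy)
    rw [List.map_congr_left this, List.map_id]

lemma card_arr_sort (S : Finset ℤ) :
    (arr (S.sort (· ≤ ·))).card = eulerNum S.card := by
  have := card_arr_eq (S.sort (· ≤ ·)) (Finset.sortedLT_sort S).pairwise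
  rwa [Finset.length_sort] at this

end TauAux

namespace TauAux

lemma isUpDown_iff' (l : List ℤ) : IsUpDown l ↔
    ∀ i : ℕ, (h : i + 1 < l.length) →
      (i % 2 = 0 → l[i]'(by omega) < l[i+1]'h) ∧ (i % 2 = 1 → l[i+1]'h < l[i]'(by omega)) := by
  rw [isUpDown_iff]
  constructor <;> intro h i hi <;> have := h i hi
  · rw [Nat.even_iff] at this
    exact ⟨fun hp => this.1 hp, fun hp => this.2 (by omega)⟩
  · rw [Nat.even_iff]
    exact ⟨fun hp => this.1 hp, fun hp => this.2 (by omega)⟩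

lemma getElem_idx (l : List ℤ) {i j : ℕ} (h : i = j) (hi : i < l.length) :
    l[i]'hi = l[j]'(h ▸ hi) := by subst h; rfl

lemma updown_take {l : List ℤ} (h : IsUpDown l) (k : ℕ) : IsUpDown (l.take k) := by
  rw [isUpDown_iff'] at h ⊢
  intro i hi
  have hlen : (l.take k).length = min k l.length := List.length_take
  have h1 : i + 1 < l.length := by omega
  have := h i h1
  simpa only [List.getElem_take] using this

lemma updown_drop {l : List ℤ} (h : IsUpDown l) {k : ℕ} (hk : k % 2 = 0) :
    IsUpDown (l.drop k) := by
  rw [isUpDown_iff'] at h ⊢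
  intro i hi
  have hlen : (l.drop k).length = l.length - k := List.length_drop
  have h1 : (k + i) + 1 < l.length := by omega
  have := h (k + i) h1
  simp only [List.getElem_drop]
  exact ⟨fun hp => this.1 (by omega), fun hp => this.2 (by omega)⟩

lemma updown_append {L R : List ℤ} {M : ℤ} (hL : IsUpDown L) (hR : IsUpDown R)
    (hodd : L.length % 2 = 1) (hLM : ∀ x ∈ L, x < M) (hRM : ∀ x ∈ R, x < M) :
    IsUpDown (L ++ M :: R) := by
  classical
  set p := L.length with hp
  have hlen : (L ++ M :: R).length = p + R.length + 1 := by
    rw [List.length_append, List.length_cons]; omega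
  have hgetL : ∀ (j : ℕ) (hj : j < p), (L ++ M :: R)[j]'(by omega) = L[j]'hj := by
    intro j hj
    exact List.getElem_append_left hj
  have hgetM : ∀ (hj : p < (L ++ M :: R).length), (L ++ M :: R)[p]'hj = M := by
    intro hj
    rw [List.getElem_append_right (le_refl p)]
    simp [← hp]
  have hgetR : ∀ (j : ℕ) (hj : j < R.length), (L ++ M :: R)[p + 1 + j]'(by omega) = R[j]'hj := by
    intro j hj
    rw [List.getElem_append_right (by omega : p ≤ p + 1 + j)]
    have : p + 1 + j - L.length = j + 1 := by omega
    simp only [this]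
    simp
  rw [isUpDown_iff'] at hL hR ⊢
  intro j hj
  rcases Nat.lt_trichotomy (j+1) p with hc | hc | hc
  · -- inside L
    have h1 : j < p := by omega
    constructor <;> intro hpar <;>
      rw [hgetL j h1, hgetL (j+1) hc]
    · exact (hL j hc).1 hpar
    · exact (hL j hc).2 hpar
  · -- j+1 = p, junction rise
    have h1 : j < p := by omega
    have hjpar : j % 2 = 0 := by omega
    have hLj : L[j]'h1 ∈ L := List.getElem_mem h1
    constructor <;> intro hpar
    · rw [hgetL j h1, getElem_idx _ hc, hgetM (by omega)]
      exact hLM _ hLj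
    · omega
  · rcases Nat.lt_trichotomy j p with hc2 | hc2 | hc2
    · omega
    · -- j = p, fall to R head
      have hR0 : 0 < R.length := by omega
      have hpar : j % 2 = 1 := by omega
      constructor <;> intro hpar2
      · omega
      · have e1 : (L ++ M :: R)[j]'(by omega) = M := by
          rw [getElem_idx _ hc2]; exact hgetM (by omega)
        have e2 : (L ++ M :: R)[j+1]'hj = R[0]'hR0 := by
          rw [getElem_idx _ (show j + 1 = p + 1 + 0 by omega)]; exact hgetR 0 hR0
        rw [e1, e2]
        exact hRM _ (List.getElem_mem hR0)
    · -- inside R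
      have ht : j - (p+1) + 1 < R.length := by omega
      have hparity : (j - (p+1)) % 2 = j % 2 := by omega
      have e1 : (L ++ M :: R)[j]'(by omega) = R[j - (p+1)]'(by omega) := by
        rw [getElem_idx _ (show j = p + 1 + (j - (p+1)) by omega)]; exact hgetR _ (by omega)
      have e2 : (L ++ M :: R)[j+1]'hj = R[j - (p+1) + 1]'ht := by
        rw [getElem_idx _ (show j + 1 = p + 1 + (j - (p+1) + 1) by omega)]; exact hgetR _ ht
      have := hR (j - (p+1)) ht
      constructor <;> intro hpar <;> rw [e1, e2]
      · exact this.1 (by omega)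
      · exact this.2 (by omega)

end TauAux

namespace TauAux

lemma mem_baseList' {m : ℕ} (hm : 1 ≤ m) {x : ℤ} :
    x ∈ baseList (2*m-1) ↔ 1 ≤ x ∧ x ≤ 2*(m:ℤ)-1 := by
  rw [mem_baseList]
  constructor <;> intro h <;> constructor <;> omega

lemma arr_facts {m : ℕ} (hm : 2 ≤ m) {l : List ℤ}
    (hl : l ∈ arr (baseList (2*m-1))) :
    l.length = 2*m-1 ∧ l.Nodup ∧
    List.idxOf (2*(m:ℤ)-1) l < l.length ∧
    (List.idxOf (2*(m:ℤ)-1) l) % 2 = 1 ∧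
    (∀ (j : ℕ) (hj : j < l.length), j ≠ List.idxOf (2*(m:ℤ)-1) l → l[j] < 2*(m:ℤ)-1) := by
  obtain ⟨hperm, hud⟩ := mem_arr.1 hl
  set Mv : ℤ := 2*(m:ℤ)-1 with hMv
  have hlen : l.length = 2*m-1 := by rw [hperm.length_eq, length_baseList]
  have hnd : l.Nodup := hperm.nodup_iff.2 (nodup_baseList _)
  have hmem : ∀ x : ℤ, x ∈ l ↔ 1 ≤ x ∧ x ≤ Mv := by
    intro x
    rw [hperm.mem_iff, mem_baseList' (by omega)]
  have hMl : Mv ∈ l := (hmem Mv).2 ⟨by omega, le_refl _⟩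
  set p := List.idxOf Mv l with hp
  have hpl : p < l.length := List.idxOf_lt_length_iff.2 hMl
  have hMp : l[p] = Mv := List.getElem_idxOf hpl
  have hmax : ∀ (j : ℕ) (hj : j < l.length), j ≠ p → l[j] < Mv := by
    intro j hj hjp
    have h1 : l[j] ∈ l := List.getElem_mem hj
    have h2 := (hmem _).1 h1
    rcases lt_or_eq_of_le h2.2 with h | h
    · exact h
    · exfalso
      have : l[j] = l[p] := by rw [hMp, h]
      exact hjp ((List.Nodup.getElem_inj_iff hnd).1 this)
  refine ⟨hlen, hnd, hpl, ?_, hmax⟩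
  by_contra hpe
  have hpe : p % 2 = 0 := by omega
  have hud' := (isUpDown_iff' l).1 hud
  rcases Nat.lt_or_ge (p+1) l.length with hc | hc
  · have := (hud' p hc).1 hpe
    have h2 := hmax (p+1) hc (by omega)
    rw [hMp] at this
    omega
  · -- p = l.length - 1 = 2m-2, p ≥ 2
    have hpv : p = 2*m-2 := by omega
    have hp2 : 2 ≤ p := by omega
    have hcmp : (p-1) + 1 < l.length := by omega
    have := (hud' (p-1) hcmp).2 (by omega)
    have he : l[(p-1)+1]'hcmp = Mv := by
      rw [getElem_idx _ (show p - 1 + 1 = p by omega)]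
      exact hMp
    rw [he] at this
    have h2 := hmax (p-1) (by omega) (by omega)
    omega

lemma fiber_card {m : ℕ} (hm : 2 ≤ m) (i : ℕ) (hi : i ∈ Finset.Icc 1 (m-1)) (S : Finset ℤ)
    (hS : S ∈ Finset.powersetCard (2*i-1) (Finset.Icc (1:ℤ) (2*(m:ℤ)-2))) :
    ((arr (baseList (2*m-1))).filter
        (fun l => (List.idxOf (2*(m:ℤ)-1) l + 1)/2 = i ∧
          (l.take (List.idxOf (2*(m:ℤ)-1) l)).toFinset = S)).card
      = eulerNum (2*i-1) * eulerNum (2*(m-i)-1) := by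
  classical
  set Mv : ℤ := 2*(m:ℤ)-1 with hMv
  rw [Finset.mem_Icc] at hi
  rw [Finset.mem_powersetCard] at hS
  obtain ⟨hSsub, hScard⟩ := hS
  set Sc : Finset ℤ := Finset.Icc (1:ℤ) (2*(m:ℤ)-2) \ S with hSc
  have hIcc_card : (Finset.Icc (1:ℤ) (2*(m:ℤ)-2)).card = 2*m-2 := by
    rw [Int.card_Icc]
    omega
  have hSccard : Sc.card = 2*(m-i)-1 := by
    rw [hSc, Finset.card_sdiff_of_subset hSsub, hIcc_card, hScard]
    omega
  have hSmem : ∀ x ∈ S, 1 ≤ x ∧ x ≤ 2*(m:ℤ)-2 := by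
    intro x hx
    have := hSsub hx
    rwa [Finset.mem_Icc] at this
  have hScmem : ∀ x : ℤ, x ∈ Sc ↔ ((1 ≤ x ∧ x ≤ 2*(m:ℤ)-2) ∧ x ∉ S) := by
    intro x
    rw [hSc, Finset.mem_sdiff, Finset.mem_Icc]
  have hrhs : eulerNum (2*i-1) * eulerNum (2*(m-i)-1)
      = ((arr (S.sort (· ≤ ·))) ×ˢ (arr (Sc.sort (· ≤ ·)))).card := by
    rw [Finset.card_product, card_arr_sort, card_arr_sort, hScard, hSccard]
  rw [hrhs]
  refine Finset.card_bij'
    (fun l _ => (l.take (List.idxOf Mv l), l.drop (List.idxOf Mv l + 1)))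
    (fun q _ => q.1 ++ Mv :: q.2) ?_ ?_ ?_ ?_
  · -- forward maps into product
    intro l hl
    rw [Finset.mem_filter] at hl
    obtain ⟨hl, hcond⟩ := hl
    obtain ⟨hlen, hnd, hpl, hpodd, hmax⟩ := arr_facts hm hl
    obtain ⟨hperm, hud⟩ := mem_arr.1 hl
    set p := List.idxOf Mv l with hp
    have hpi : p = 2*i-1 := by omega
    have hMp : l[p] = Mv := List.getElem_idxOf hpl
    have hdrop : l.drop p = Mv :: l.drop (p+1) := by
      rw [List.drop_eq_getElem_cons hpl, hMp]
    have hdecomp : l = l.take p ++ Mv :: l.drop (p+1) := by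
      conv_lhs => rw [← List.take_append_drop p l]
      rw [hdrop]
    have hndL : (l.take p).Nodup := (List.take_sublist p l).nodup hnd
    have hndR : (l.drop (p+1)).Nodup := (List.drop_sublist (p+1) l).nodup hnd
    have hnd2 : (l.take p ++ Mv :: l.drop (p+1)).Nodup := hdecomp ▸ hnd
    rw [List.nodup_append] at hnd2
    have hdisj : (l.take p).Disjoint (Mv :: l.drop (p+1)) := fun a ha hb => hnd2.2.2 a ha a hb rfl
    have hLS : ∀ x, x ∈ l.take p ↔ x ∈ S := by
      intro x
      rw [← hcond.2, List.mem_toFinset]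
    have hmem : ∀ x : ℤ, x ∈ l ↔ 1 ≤ x ∧ x ≤ Mv := by
      intro x
      rw [hperm.mem_iff, mem_baseList' (by omega)]
    have hRSc : ∀ x, x ∈ l.drop (p+1) ↔ x ∈ Sc := by
      intro x
      rw [hScmem]
      constructor
      · intro hx
        have hxl : x ∈ l := (List.drop_sublist (p+1) l).mem hx
        have hb := (hmem x).1 hxl
        have hxM : x ≠ Mv := by
          intro he
          have : Mv ∈ Mv :: l.drop (p+1) := List.mem_cons_self
          have h2 : (Mv:ℤ) ∉ l.take p := fun hc => hdisj hc this
          rw [he] at hx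
          exact (List.nodup_cons.1 hnd2.2.1).1 hx
        have hxL : x ∉ l.take p := by
          intro hc
          exact hdisj hc (List.mem_cons_of_mem _ hx)
        rw [← hLS]
        exact ⟨⟨hb.1, by omega⟩, hxL⟩
      · rintro ⟨⟨h1, h2⟩, hnS⟩
        have hxl : x ∈ l := (hmem x).2 ⟨h1, by omega⟩
        rw [hdecomp, List.mem_append, List.mem_cons] at hxl
        rcases hxl with h | h | h
        · exact absurd ((hLS x).1 h) hnS
        · omega
        · exact h
    rw [Finset.mem_product]
    constructor
    · rw [mem_arr]
      refine ⟨?_, updown_take hud p⟩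
      rw [List.perm_ext_iff_of_nodup hndL (Finset.sort_nodup _ _)]
      intro a
      rw [Finset.mem_sort, hLS]
    · rw [mem_arr]
      refine ⟨?_, updown_drop hud (by omega)⟩
      rw [List.perm_ext_iff_of_nodup hndR (Finset.sort_nodup _ _)]
      intro a
      rw [Finset.mem_sort, hRSc]
  · -- backward maps into fiber
    intro q hq
    rw [Finset.mem_product] at hq
    obtain ⟨hqL, hqR⟩ := hq
    obtain ⟨hLperm, hLud⟩ := mem_arr.1 hqL
    obtain ⟨hRperm, hRud⟩ := mem_arr.1 hqR
    set L := q.1 with hL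
    set R := q.2 with hR
    have hLmem : ∀ x, x ∈ L ↔ x ∈ S := by
      intro x
      rw [hLperm.mem_iff, Finset.mem_sort]
    have hRmem : ∀ x, x ∈ R ↔ x ∈ Sc := by
      intro x
      rw [hRperm.mem_iff, Finset.mem_sort]
    have hLlen : L.length = 2*i-1 := by
      rw [hLperm.length_eq, Finset.length_sort, hScard]
    have hRlen : R.length = 2*(m-i)-1 := by
      rw [hRperm.length_eq, Finset.length_sort, hSccard]
    have hLbound : ∀ x ∈ L, 1 ≤ x ∧ x ≤ 2*(m:ℤ)-2 := by
      intro x hx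
      exact hSmem x ((hLmem x).1 hx)
    have hRbound : ∀ x ∈ R, 1 ≤ x ∧ x ≤ 2*(m:ℤ)-2 := by
      intro x hx
      exact ((hScmem x).1 ((hRmem x).1 hx)).1
    have hndL : L.Nodup := hLperm.nodup_iff.2 (Finset.sort_nodup _ _)
    have hndR : R.Nodup := hRperm.nodup_iff.2 (Finset.sort_nodup _ _)
    have hMnR : Mv ∉ R := by
      intro hc
      have := (hRbound Mv hc).2
      omega
    have hMnL : Mv ∉ L := by
      intro hc
      have := (hLbound Mv hc).2
      omega
    have hdisj : L.Disjoint (Mv :: R) := by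
      intro a haL haR
      rw [List.mem_cons] at haR
      rcases haR with h | h
      · rw [h] at haL; exact hMnL haL
      · have h1 := (hLmem a).1 haL
        have h2 := (hScmem a).1 ((hRmem a).1 h)
        exact h2.2 h1
    have hnd : (L ++ Mv :: R).Nodup := by
      rw [List.nodup_append]
      exact ⟨hndL, List.nodup_cons.2 ⟨hMnR, hndR⟩, fun a ha b hb hab => hdisj ha (hab ▸ hb)⟩
    have hidx : List.idxOf Mv (L ++ Mv :: R) = L.length := by
      rw [List.idxOf_append_of_notMem hMnL, List.idxOf_cons_self]
      omega
    have htake : (L ++ Mv :: R).take L.length = L := List.take_left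
    rw [Finset.mem_filter]
    refine ⟨?_, ?_, ?_⟩
    · rw [mem_arr]
      constructor
      · rw [List.perm_ext_iff_of_nodup hnd (nodup_baseList _)]
        intro a
        rw [mem_baseList' (by omega), List.mem_append, List.mem_cons]
        constructor
        · rintro (h | h | h)
          · have := (hLbound a h); constructor <;> omega
          · constructor <;> omega
          · have := (hRbound a h); constructor <;> omega
        · rintro ⟨h1, h2⟩
          rcases eq_or_lt_of_le h2 with h | h
          · right; left; exact h
          · by_cases hc : a ∈ S
            · left; exact (hLmem a).2 hc
            · right; right
              rw [hRmem, hScmem]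
              exact ⟨⟨h1, by omega⟩, hc⟩
      · refine updown_append hLud hRud ?_ ?_ ?_
        · rw [hLlen]; omega
        · intro x hx; have := (hLbound x hx).2; omega
        · intro x hx; have := (hRbound x hx).2; omega
    · rw [hidx, hLlen]
      omega
    · rw [hidx, htake]
      ext x
      rw [List.mem_toFinset, hLmem]
  · -- left inverse
    intro l hl
    rw [Finset.mem_filter] at hl
    obtain ⟨hl, hcond⟩ := hl
    obtain ⟨hlen, hnd, hpl, hpodd, hmax⟩ := arr_facts hm hl
    set p := List.idxOf Mv l with hp
    have hMp : l[p] = Mv := List.getElem_idxOf hpl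
    have hdrop : l.drop p = Mv :: l.drop (p+1) := by
      rw [List.drop_eq_getElem_cons hpl, hMp]
    show l.take p ++ Mv :: l.drop (p+1) = l
    conv_rhs => rw [← List.take_append_drop p l]
    rw [hdrop]
  · -- right inverse
    intro q hq
    rw [Finset.mem_product] at hq
    obtain ⟨hqL, hqR⟩ := hq
    obtain ⟨hLperm, _⟩ := mem_arr.1 hqL
    obtain ⟨hRperm, _⟩ := mem_arr.1 hqR
    have hLbound : ∀ x ∈ q.1, 1 ≤ x ∧ x ≤ 2*(m:ℤ)-2 := by
      intro x hx
      exact hSmem x (by rwa [hLperm.mem_iff, Finset.mem_sort] at hx)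
    have hMnL : Mv ∉ q.1 := by
      intro hc
      have := (hLbound Mv hc).2
      omega
    have hidx : List.idxOf Mv (q.1 ++ Mv :: q.2) = q.1.length := by
      rw [List.idxOf_append_of_notMem hMnL, List.idxOf_cons_self]
      omega
    show ((q.1 ++ Mv :: q.2).take (List.idxOf Mv (q.1 ++ Mv :: q.2)),
          (q.1 ++ Mv :: q.2).drop (List.idxOf Mv (q.1 ++ Mv :: q.2) + 1)) = q
    rw [hidx]
    have h1 : (q.1 ++ Mv :: q.2).take q.1.length = q.1 := List.take_left
    have h2 : (q.1 ++ Mv :: q.2).drop (q.1.length + 1) = q.2 := by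
      have := List.drop_left (l₁ := q.1) (l₂ := Mv :: q.2)
      have h3 : (q.1 ++ Mv :: q.2).drop (q.1.length + 1)
          = ((q.1 ++ Mv :: q.2).drop q.1.length).drop 1 := by
        rw [List.drop_drop]
      rw [h3, this]
      rfl
    rw [h1, h2]

lemma eulerNum_rec {m : ℕ} (hm : 2 ≤ m) :
    eulerNum (2*m-1) = ∑ i ∈ Finset.Icc 1 (m-1),
      Nat.choose (2*m-2) (2*i-1) * (eulerNum (2*i-1) * eulerNum (2*(m-i)-1)) := by
  classical
  set Mv : ℤ := 2*(m:ℤ)-1 with hMv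
  rw [eulerNum_eq_card_arr]
  have hmapsto : ∀ l ∈ arr (baseList (2*m-1)),
      (⟨(List.idxOf Mv l + 1)/2, (l.take (List.idxOf Mv l)).toFinset⟩ : Σ _ : ℕ, Finset ℤ)
        ∈ (Finset.Icc 1 (m-1)).sigma
            (fun i => Finset.powersetCard (2*i-1) (Finset.Icc (1:ℤ) (2*(m:ℤ)-2))) := by
    intro l hl
    obtain ⟨hlen, hnd, hpl, hpodd, hmax⟩ := arr_facts hm hl
    obtain ⟨hperm, hud⟩ := mem_arr.1 hl
    set p := List.idxOf Mv l with hp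
    rw [Finset.mem_sigma, Finset.mem_Icc, Finset.mem_powersetCard]
    dsimp only
    have hndL : (l.take p).Nodup := (List.take_sublist p l).nodup hnd
    have hlentake : (l.take p).length = p := by
      rw [List.length_take]
      omega
    refine ⟨⟨by omega, by omega⟩, ?_, ?_⟩
    · intro x hx
      rw [List.mem_toFinset] at hx
      obtain ⟨j, hj, hjx⟩ := List.mem_iff_getElem.1 hx
      have hjp : j < p := by omega
      have hjl : j < l.length := by omega
      have : (l.take p)[j] = l[j] := List.getElem_take
      rw [this] at hjx
      have hlt := hmax j hjl (by omega)
      have hmem := (hperm.mem_iff.1 (List.getElem_mem hjl))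
      rw [mem_baseList' (by omega)] at hmem
      rw [Finset.mem_Icc, ← hjx]
      constructor
      · exact hmem.1
      · omega
    · rw [List.toFinset_card_of_nodup hndL, hlentake]
      omega
  rw [Finset.card_eq_sum_card_fiberwise hmapsto, Finset.sum_sigma]
  apply Finset.sum_congr rfl
  intro i hi
  have hstep : ∀ S ∈ Finset.powersetCard (2*i-1) (Finset.Icc (1:ℤ) (2*(m:ℤ)-2)),
      ((arr (baseList (2*m-1))).filter
        (fun l => (⟨(List.idxOf Mv l + 1)/2, (l.take (List.idxOf Mv l)).toFinset⟩
            : Σ _ : ℕ, Finset ℤ) = ⟨i, S⟩)).card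
        = eulerNum (2*i-1) * eulerNum (2*(m-i)-1) := by
    intro S hS
    rw [← fiber_card hm i hi S hS]
    congr 1
    apply Finset.filter_congr
    intro l _
    simp [hMv]
  have hIcc_card' : (Finset.Icc (1:ℤ) (2*(m:ℤ)-2)).card = 2*m-2 := by
    rw [Int.card_Icc]; omega
  rw [Finset.sum_congr rfl hstep, Finset.sum_const, Finset.card_powersetCard, hIcc_card',
    smul_eq_mul]
  
end TauAux

namespace TauAux

open PowerSeries

noncomputable def Bq (n : ℕ) : ℚ :=
  if n = 0 then 0 else (eulerNum (2*n-1) : ℚ) / (2*n-1).factorial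

noncomputable def Aq (n : ℕ) : ℚ := Bq n / (4^n - 1)

lemma Bq_one : Bq 1 = 1 := by
  rw [Bq]
  norm_num [eulerNum_one]

lemma Aq_zero : Aq 0 = 0 := by simp [Aq, Bq]

lemma Bq_zero : Bq 0 = 0 := by simp [Bq]

lemma fact_ne_zero (n : ℕ) : ((n.factorial : ℚ)) ≠ 0 := by
  exact_mod_cast n.factorial_ne_zero

lemma Bq_rec {m : ℕ} (hm : 2 ≤ m) :
    (2*(m:ℚ)-1) * Bq m = ∑ i ∈ Finset.Icc 1 (m-1), Bq i * Bq (m-i) := by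
  have hrec := eulerNum_rec hm
  have hterm : ∀ i ∈ Finset.Icc 1 (m-1), Bq i * Bq (m-i)
      = ((2*m-2).choose (2*i-1) * (eulerNum (2*i-1) * eulerNum (2*(m-i)-1)) : ℕ)
          / ((2*m-2).factorial : ℚ) := by
    intro i hi
    rw [Finset.mem_Icc] at hi
    have hi1 : i ≠ 0 := by omega
    have hi2 : m - i ≠ 0 := by omega
    have hle : 2*i-1 ≤ 2*m-2 := by omega
    have hsub : 2*m-2 - (2*i-1) = 2*(m-i)-1 := by omega
    have hkey : ((2*m-2).choose (2*i-1) : ℚ) * (2*i-1).factorial * (2*(m-i)-1).factorial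
        = (2*m-2).factorial := by
      rw [← hsub]
      exact_mod_cast congrArg (Nat.cast (R := ℚ)) (Nat.choose_mul_factorial_mul_factorial hle)
    rw [Bq, Bq, if_neg hi1, if_neg hi2]
    push_cast
    field_simp
    linear_combination (-(eulerNum (2*i-1) : ℚ) * (eulerNum (2*(m-i)-1) : ℚ)) * hkey
  rw [Finset.sum_congr rfl hterm, ← Finset.sum_div]
  have hsum : ∑ i ∈ Finset.Icc 1 (m-1),
      (((2*m-2).choose (2*i-1) * (eulerNum (2*i-1) * eulerNum (2*(m-i)-1)) : ℕ) : ℚ)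
      = (eulerNum (2*m-1) : ℚ) := by
    rw [← Nat.cast_sum]
    exact_mod_cast (congrArg (Nat.cast (R := ℚ)) hrec.symm)
  rw [hsum, Bq, if_neg (by omega : m ≠ 0)]
  have hfacs : ((2*m-1).factorial : ℚ) = (2*(m:ℚ)-1) * (2*m-2).factorial := by
    have h1 : 2*m-1 = (2*m-2) + 1 := by omega
    rw [h1, Nat.factorial_succ]
    push_cast
    have : ((2*m-2 : ℕ) : ℚ) = 2*(m:ℚ)-2 := by
      push_cast [Nat.cast_sub (by omega : 2 ≤ 2*m)]
      ring
    rw [this]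
    ring
  rw [hfacs]
  have h1 : (2*(m:ℚ)-1) ≠ 0 := by
    have : (2:ℚ) ≤ (m:ℚ) := by exact_mod_cast hm
    nlinarith
  field_simp

noncomputable def Fs : ℚ⟦X⟧ := PowerSeries.mk fun k => if k % 2 = 1 then Bq ((k+1)/2) else 0

noncomputable def Ts : ℚ⟦X⟧ := rescale (1/2 : ℚ) Fs

noncomputable def Hs : ℚ⟦X⟧ :=
  PowerSeries.mk fun k => if k = 0 then 1 else if k % 2 = 0 then -Aq (k/2) else 0

lemma coeff_Fs (k : ℕ) : coeff k Fs = if k % 2 = 1 then Bq ((k+1)/2) else 0 := coeff_mk _ _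

lemma coeff_Fs_even (n : ℕ) : coeff (2*n) Fs = 0 := by
  rw [coeff_Fs, if_neg (by omega)]

lemma coeff_Fs_odd (n : ℕ) : coeff (2*n+1) Fs = Bq (n+1) := by
  rw [coeff_Fs, if_pos (by omega)]
  congr 1
  omega

lemma coeff_Ts (k : ℕ) : coeff k Ts = (1/2 : ℚ)^k * coeff k Fs := coeff_rescale _ _ _

lemma coeff_Hs (k : ℕ) :
    coeff k Hs = if k = 0 then 1 else if k % 2 = 0 then -Aq (k/2) else 0 := coeff_mk _ _

lemma coeff_Hs_even {n : ℕ} (hn : 1 ≤ n) : coeff (2*n) Hs = -Aq n := by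
  rw [coeff_Hs, if_neg (show ¬(2*n = 0) by omega), if_pos (show (2*n) % 2 = 0 by omega),
    show 2*n/2 = n by omega]

lemma coeff_Hs_odd (n : ℕ) : coeff (2*n+1) Hs = 0 := by
  rw [coeff_Hs, if_neg (show ¬(2*n+1 = 0) by omega), if_neg (show ¬((2*n+1) % 2 = 0) by omega)]

lemma coeff_Hs_zero : coeff 0 Hs = 1 := by
  rw [coeff_Hs, if_pos rfl]

-- summation helpers
lemma sum_Icc_one (f : ℕ → ℚ) (n : ℕ) :
    ∑ i ∈ Finset.Icc 1 n, f i = ∑ a ∈ Finset.range n, f (a+1) := by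
  induction n with
  | zero => simp
  | succ k ih =>
    rw [Finset.sum_Icc_succ_top (by omega), ih, Finset.sum_range_succ]

lemma sum_range_odd (h : ℕ → ℚ) (hev : ∀ k, k % 2 = 0 → h k = 0) (n : ℕ) :
    ∑ k ∈ Finset.range (2*n+1), h k = ∑ a ∈ Finset.range n, h (2*a+1) := by
  induction n with
  | zero => simpa using hev 0 rfl
  | succ k ih =>
    have e1 : 2*(k+1)+1 = (2*k+1) + 1 + 1 := by omega
    rw [e1, Finset.sum_range_succ, Finset.sum_range_succ, ih, Finset.sum_range_succ]
    rw [hev (2*k+1+1) (by omega)]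
    ring

lemma sum_range_even (h : ℕ → ℚ) (hodd : ∀ k, k % 2 = 1 → h k = 0) (n : ℕ) :
    ∑ k ∈ Finset.range (2*n+1), h k = ∑ a ∈ Finset.range (n+1), h (2*a) := by
  induction n with
  | zero => simp
  | succ k ih =>
    have e1 : 2*(k+1)+1 = (2*k+1) + 1 + 1 := by omega
    rw [e1, Finset.sum_range_succ, Finset.sum_range_succ, ih,
      Finset.sum_range_succ (fun a => h (2*a)) (k+1)]
    rw [hodd (2*k+1) (by omega)]
    have : 2*k+1+1 = 2*(k+1) := by omega
    rw [this]
    ring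

lemma coeff_FF_even (n : ℕ) :
    coeff (2*n) (Fs * Fs) = ∑ a ∈ Finset.Icc 1 n, Bq a * Bq (n+1-a) := by
  rw [coeff_mul, Finset.Nat.sum_antidiagonal_eq_sum_range_succ_mk]
  rw [show (2*n).succ = 2*n+1 from rfl]
  rw [sum_range_odd (fun k => coeff k Fs * coeff (2*n-k) Fs) ?hev n]
  case hev =>
    intro k hk
    obtain ⟨a, rfl⟩ : ∃ a, k = 2*a := ⟨k/2, by omega⟩
    rw [coeff_Fs_even]
    ring
  rw [sum_Icc_one]
  apply Finset.sum_congr rfl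
  intro a ha
  rw [Finset.mem_range] at ha
  rw [coeff_Fs_odd, show 2*n - (2*a+1) = 2*(n-a-1)+1 by omega, coeff_Fs_odd,
    show n-a-1+1 = n+1-(a+1) by omega]

lemma coeff_FF_odd (n : ℕ) : coeff (2*n+1) (Fs * Fs) = 0 := by
  rw [coeff_mul]
  apply Finset.sum_eq_zero
  intro p hp
  rw [Finset.HasAntidiagonal.mem_antidiagonal] at hp
  rcases Nat.even_or_odd p.1 with he | ho
  · obtain ⟨a, ha⟩ := he
    have : p.1 = 2*a := by omega
    rw [this, coeff_Fs_even]
    ring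
  · obtain ⟨a, ha⟩ := ho
    have : p.2 = 2*((2*n+1-p.1)/2) := by omega
    rw [this, coeff_Fs_even]
    ring

lemma Fs_deriv : d⁄dX ℚ Fs = 1 + Fs^2 := by
  ext k
  rw [PowerSeries.coeff_derivative, map_add, coeff_one, sq]
  rcases Nat.even_or_odd k with he | ho
  · rw [Nat.even_iff] at he
    obtain ⟨n, rfl⟩ : ∃ n, k = 2*n := ⟨k/2, by omega⟩
    rw [coeff_Fs_odd, coeff_FF_even]
    rcases Nat.eq_zero_or_pos n with rfl | hn
    · simp [Bq_one]
    · rw [if_neg (show ¬(2*n = 0) by omega)]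
      have hrec := Bq_rec (m := n+1) (by omega)
      rw [show (n+1) - 1 = n by omega] at hrec
      rw [← hrec]
      push_cast
      ring
  · rw [Nat.odd_iff] at ho
    obtain ⟨n, rfl⟩ : ∃ n, k = 2*n+1 := ⟨k/2, by omega⟩
    rw [show 2*n+1+1 = 2*(n+1) from by omega, coeff_Fs_even, coeff_FF_odd,
      if_neg (show ¬(2*n+1 = 0) by omega)]
    ring

end TauAux

namespace TauAux

open PowerSeries

lemma C_two' : C (2:ℚ) = 2 := map_ofNat _ 2

lemma deriv_rescale (a : ℚ) (f : ℚ⟦X⟧) :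
    d⁄dX ℚ (rescale a f) = C a * rescale a (d⁄dX ℚ f) := by
  ext k
  rw [PowerSeries.coeff_derivative, coeff_rescale, coeff_C_mul, coeff_rescale,
    PowerSeries.coeff_derivative]
  rw [pow_succ]
  ring

lemma ode_unique {G D : ℚ⟦X⟧} (h0 : coeff 0 D = 0) (hD : d⁄dX ℚ D = G * D) : D = 0 := by
  have key : ∀ k, coeff k D = 0 := by
    intro k
    induction k using Nat.strong_induction_on with
    | _ k ih =>
      match k with
      | 0 => exact h0
      | (k+1) =>
        have h1 : coeff k (d⁄dX ℚ D) = coeff (k+1) D * (k+1) :=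
          PowerSeries.coeff_derivative D k
        rw [hD, coeff_mul] at h1
        have h2 : ∑ p ∈ Finset.HasAntidiagonal.antidiagonal k, coeff p.1 G * coeff p.2 D = 0 := by
          apply Finset.sum_eq_zero
          intro p hp
          rw [Finset.HasAntidiagonal.mem_antidiagonal] at hp
          rw [ih p.2 (by omega)]
          ring
        rw [h2] at h1
        have h3 : ((k:ℚ)+1) ≠ 0 := by positivity
        field_simp at h1
        exact (mul_eq_zero.1 h1.symm).resolve_right h3
  ext k
  rw [key k, map_zero]

lemma half_unique {U D : ℚ⟦X⟧} (hU0 : coeff 0 U = 0) (hU1 : coeff 1 U = 0)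
    (h0 : coeff 0 D = 0) (h1 : coeff 1 D = 0)
    (heq : D * (1 - U) = 2 * rescale (1/2 : ℚ) D) : D = 0 := by
  have key : ∀ k, coeff k D = 0 := by
    intro k
    induction k using Nat.strong_induction_on with
    | _ k ih =>
      match k with
      | 0 => exact h0
      | 1 => exact h1
      | (m+2) =>
        have hc := congrArg (coeff (m+2)) heq
        rw [mul_sub, mul_one, map_sub, coeff_mul] at hc
        have h2 : ∑ p ∈ Finset.HasAntidiagonal.antidiagonal (m+2), coeff p.1 D * coeff p.2 U = 0 := by
          apply Finset.sum_eq_zero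
          intro p hp
          rw [Finset.HasAntidiagonal.mem_antidiagonal] at hp
          match hq : p.2 with
          | 0 => rw [hU0]; ring
          | 1 => rw [hU1]; ring
          | (q+2) =>
            rw [ih p.1 (by omega)]
            ring
        rw [h2, sub_zero] at hc
        have h3 : coeff (m+2) (2 * rescale (1/2 : ℚ) D)
            = 2 * (1/2:ℚ)^(m+2) * coeff (m+2) D := by
          rw [← C_two', coeff_C_mul, coeff_rescale]
          ring
        rw [h3] at hc
        have h4 : (1 : ℚ) - 2 * (1/2:ℚ)^(m+2) ≠ 0 := by
          have : (1/2:ℚ)^(m+2) ≤ (1/2)^2 := by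
            apply pow_le_pow_of_le_one (by norm_num) (by norm_num)
            omega
          have hpos : (0:ℚ) < (1/2:ℚ)^(m+2) := by positivity
          nlinarith
        have : (1 - 2*(1/2:ℚ)^(m+2)) * coeff (m+2) D = 0 := by linarith
        rcases mul_eq_zero.1 this with h | h
        · exact absurd h h4
        · exact h
  ext k
  rw [key k, map_zero]

lemma two_C_half : (2 : ℚ⟦X⟧) * C (1/2) = 1 := by
  rw [← C_two', ← map_mul]
  norm_num

lemma Ts_deriv : d⁄dX ℚ Ts = C (1/2) * (1 + Ts^2) := by
  rw [Ts, deriv_rescale, Fs_deriv, map_add, map_one, map_pow]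

lemma coeff_Ts_zero : coeff 0 Ts = 0 := by
  rw [coeff_Ts]
  rw [show (0:ℕ) = 2*0 from rfl, coeff_Fs_even]
  ring

lemma const_Fs : constantCoeff Fs = 0 := by
  rw [← PowerSeries.coeff_zero_eq_constantCoeff, show (0:ℕ) = 2*0 from rfl, coeff_Fs_even]

lemma const_Ts : constantCoeff Ts = 0 := by
  rw [← PowerSeries.coeff_zero_eq_constantCoeff]
  exact coeff_Ts_zero

lemma Ts_sq_deriv : d⁄dX ℚ (Ts^2) = 2 * Ts * (C (1/2) * (1 + Ts^2)) := by
  rw [sq, Derivation.leibniz, smul_eq_mul, Ts_deriv]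
  ring

lemma double_angle : Fs * (1 - Ts^2) = 2 * Ts := by
  have hD : Fs * (1 - Ts^2) - 2 * Ts = 0 := by
    apply ode_unique (G := Fs + Ts)
    · rw [PowerSeries.coeff_zero_eq_constantCoeff, map_sub, map_mul, map_mul, const_Fs,
        const_Ts]
      ring
    · have h2T : d⁄dX ℚ (2 * Ts) = 2 * d⁄dX ℚ Ts := by
        rw [← C_two', Derivation.leibniz, smul_eq_mul, smul_eq_mul, PowerSeries.derivative_C]
        ring
      have e1 : d⁄dX ℚ (1 - Ts^2) = -(2 * Ts * (C (1/2) * (1 + Ts^2))) := by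
        rw [map_sub, Ts_sq_deriv, Derivation.map_one_eq_zero]
        ring
      have e2 : d⁄dX ℚ (Fs * (1 - Ts^2))
          = Fs * (-(2 * Ts * (C (1/2) * (1 + Ts^2)))) + (1 - Ts^2) * (1 + Fs^2) := by
        rw [Derivation.leibniz, smul_eq_mul, smul_eq_mul, e1, Fs_deriv]
      rw [map_sub, e2, h2T, Ts_deriv]
      linear_combination (-(1 + Ts^2) * (1 + Fs*Ts)) * two_C_half
  exact sub_eq_zero.1 hD

end TauAux

namespace TauAux

open PowerSeries

lemma four_pow_ne {n : ℕ} (hn : 1 ≤ n) : ((4:ℚ)^n - 1) ≠ 0 := by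
  have : (4:ℚ)^1 ≤ 4^n := by
    apply pow_le_pow_right₀ (by norm_num) hn
  norm_num at this ⊢
  nlinarith

lemma Aq_mul {n : ℕ} (hn : 1 ≤ n) : Aq n * ((4:ℚ)^n - 1) = Bq n := by
  rw [Aq, div_mul_cancel₀ _ (four_pow_ne hn)]

lemma hHdef : Hs = rescale (1/2 : ℚ) Hs - C (1/2) * (X * Ts) := by
  ext k
  rw [map_sub, coeff_rescale, coeff_C_mul]
  match k with
  | 0 =>
    rw [coeff_Hs_zero, coeff_zero_X_mul]
    norm_num
  | (j+1) =>
    rw [coeff_succ_X_mul, coeff_Ts]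
    rcases Nat.even_or_odd j with he | ho
    · -- j even, k = j+1 odd
      rw [Nat.even_iff] at he
      obtain ⟨a, rfl⟩ : ∃ a, j = 2*a := ⟨j/2, by omega⟩
      rw [coeff_Hs_odd, coeff_Fs_even]
      ring
    · -- j odd, k = j+1 = 2a+2 even
      rw [Nat.odd_iff] at ho
      obtain ⟨a, rfl⟩ : ∃ a, j = 2*a+1 := ⟨j/2, by omega⟩
      rw [coeff_Fs_odd, show 2*a+1+1 = 2*(a+1) by omega, coeff_Hs_even (by omega)]
      have hAB := Aq_mul (n := a+1) (by omega)
      have hpow : ((1/2:ℚ))^(2*(a+1)) * 4^(a+1) = 1 := by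
        rw [pow_mul, ← mul_pow]
        norm_num
      have hpow2 : ((1/2:ℚ))^(2*a+1) = 2 * (1/2:ℚ)^(2*(a+1)) := by
        rw [show 2*(a+1) = (2*a+1)+1 by omega, pow_succ]
        ring
      rw [hpow2]
      linear_combination (-(1/2:ℚ)^(2*(a+1))) * hAB + (Aq (a+1)) * hpow
  
lemma coeff_one_Fs : coeff 1 Fs = 1 := by
  rw [show (1:ℕ) = 2*0+1 from rfl, coeff_Fs_odd, Bq_one]

lemma hHF : Hs * Fs = X := by
  have hD : Hs * Fs - X = 0 := by
    apply half_unique (U := Ts^2)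
    · rw [sq, PowerSeries.coeff_zero_eq_constantCoeff, map_mul, const_Ts]
      ring
    · rw [sq, coeff_mul, Finset.Nat.sum_antidiagonal_eq_sum_range_succ_mk]
      rw [show (1:ℕ).succ = 2 from rfl, Finset.sum_range_succ, Finset.sum_range_succ,
        Finset.sum_range_zero]
      dsimp only
      rw [show (1:ℕ) - 0 = 1 from rfl, show (1:ℕ) - 1 = 0 from rfl, coeff_Ts_zero]
      ring
    · rw [map_sub, PowerSeries.coeff_zero_eq_constantCoeff, map_mul, const_Fs]
      simp
    · rw [map_sub, coeff_mul, Finset.Nat.sum_antidiagonal_eq_sum_range_succ_mk]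
      rw [show (1:ℕ).succ = 2 from rfl, Finset.sum_range_succ, Finset.sum_range_succ,
        Finset.sum_range_zero]
      dsimp only
      rw [show (1:ℕ) - 0 = 1 from rfl, show (1:ℕ) - 1 = 0 from rfl]
      rw [coeff_one_Fs, coeff_Hs_zero, show (1:ℕ) = 2*0+1 from rfl, coeff_Hs_odd,
        PowerSeries.coeff_X]
      norm_num
    · rw [map_sub, map_mul, rescale_X]
      show (Hs * Fs - X) * (1 - Ts^2) = 2 * (rescale (1/2:ℚ) Hs * Ts - C (1/2) * X)
      linear_combination Hs * double_angle + 2*Ts*hHdef + (X - X*Ts^2) * two_C_half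
  exact sub_eq_zero.1 hD

lemma hXH : X * d⁄dX ℚ Hs = Hs - Hs^2 - X^2 := by
  have r1 : Hs * (1 + Fs^2) + Fs * (d⁄dX ℚ Hs) = 1 := by
    have hd := congrArg (d⁄dX ℚ) hHF
    rw [Derivation.leibniz, smul_eq_mul, smul_eq_mul, PowerSeries.derivative_X, Fs_deriv] at hd
    linear_combination hd
  linear_combination Hs * r1 - (d⁄dX ℚ Hs) * hHF - (Hs*Fs + X) * hHF

lemma Aq_rec {n : ℕ} (hn : 2 ≤ n) :
    (2*(n:ℚ)+1) * Aq n = ∑ i ∈ Finset.Icc 1 (n-1), Aq i * Aq (n-i) := by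
  have hc := congrArg (coeff (2*n)) hXH
  have hL : coeff (2*n) (X * d⁄dX ℚ Hs) = -Aq n * (2*(n:ℚ)) := by
    obtain ⟨j, hj⟩ : ∃ j, 2*n = j+1 := ⟨2*n-1, by omega⟩
    rw [hj, coeff_succ_X_mul, PowerSeries.coeff_derivative, ← hj, coeff_Hs_even (by omega)]
    have : ((j:ℚ)+1) = 2*(n:ℚ) := by
      have : (((j+1) : ℕ) : ℚ) = ((2*n : ℕ) : ℚ) := by rw [hj]
      push_cast at this
      linarith
    rw [this]
  have hH2 : coeff (2*n) (Hs^2)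
      = -2*Aq n + ∑ i ∈ Finset.Icc 1 (n-1), Aq i * Aq (n-i) := by
    rw [sq, coeff_mul, Finset.Nat.sum_antidiagonal_eq_sum_range_succ_mk,
      show (2*n).succ = 2*n+1 from rfl]
    rw [sum_range_even (fun k => coeff k Hs * coeff (2*n-k) Hs) ?hodd n]
    case hodd =>
      intro k hk
      obtain ⟨a, rfl⟩ : ∃ a, k = 2*a+1 := ⟨k/2, by omega⟩
      rw [coeff_Hs_odd]
      ring
    rw [Finset.sum_range_succ]
    rw [show Finset.range n = Finset.range ((n-1)+1) by congr 1; omega,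
      Finset.sum_range_succ']
    have e0 : coeff (2*0) Hs * coeff (2*n - 2*0) Hs = -Aq n := by
      rw [show (2*0 : ℕ) = 0 from rfl, coeff_Hs_zero, show 2*n-0 = 2*n by omega,
        coeff_Hs_even (by omega)]
      ring
    have etop : coeff (2*n) Hs * coeff (2*n - 2*n) Hs = -Aq n := by
      rw [coeff_Hs_even (by omega), show 2*n-2*n = 0 by omega, coeff_Hs_zero]
      ring
    have emid : ∀ a ∈ Finset.range (n-1),
        coeff (2*(a+1)) Hs * coeff (2*n - 2*(a+1)) Hs = Aq (a+1) * Aq (n-(a+1)) := by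
      intro a ha
      rw [Finset.mem_range] at ha
      rw [coeff_Hs_even (by omega), show 2*n - 2*(a+1) = 2*(n-(a+1)) by omega,
        coeff_Hs_even (by omega)]
      ring
    rw [Finset.sum_congr rfl emid, e0, etop, ← sum_Icc_one (fun i => Aq i * Aq (n-i)) (n-1)]
    ring
  have hX2 : coeff (2*n) (X^2 : ℚ⟦X⟧) = 0 := by
    rw [PowerSeries.coeff_X_pow, if_neg (by omega)]
  rw [hL, map_sub, map_sub, hH2, hX2, coeff_Hs_even (by omega)] at hc
  linarith [hc]

end TauAux

/-- The recursion for t_n = f^{τ_{3n}} determines t_n = (3n)! E_{2n-1} / ((2n-1)!(2^{2n}-1)). -/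
theorem tau_count (t : ℕ → ℚ) (h1 : t 1 = 2)
    (hrec : ∀ n : ℕ, 2 ≤ n →
      t n = (1 / (2 * (n : ℚ) + 1)) *
        ∑ i ∈ Finset.Icc 1 (n - 1), (Nat.choose (3 * n) (3 * i) : ℚ) * t i * t (n - i)) :
    ∀ n : ℕ, 1 ≤ n →
      t n = ((3 * n).factorial : ℚ) * (eulerNum (2 * n - 1) : ℚ) /
        (((2 * n - 1).factorial : ℚ) * (2 ^ (2 * n) - 1)) := by
  classical
  open TauAux in
  have key : ∀ n : ℕ, 1 ≤ n → t n = ((3*n).factorial : ℚ) * TauAux.Aq n := by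
    intro n
    induction n using Nat.strong_induction_on with
    | _ n ih =>
      intro hn
      rcases eq_or_lt_of_le hn with h | h
      · -- n = 1
        rw [← h, h1]
        rw [TauAux.Aq, TauAux.Bq]
        norm_num [TauAux.eulerNum_one, Nat.factorial]
      · have hn2 : 2 ≤ n := h
        rw [hrec n hn2]
        have hterm : ∀ i ∈ Finset.Icc 1 (n-1),
            ((3*n).choose (3*i) : ℚ) * t i * t (n-i)
            = ((3*n).factorial : ℚ) * (TauAux.Aq i * TauAux.Aq (n-i)) := by
          intro i hi
          rw [Finset.mem_Icc] at hi
          have hi1 : 1 ≤ i := hi.1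
          have hilt : i < n := by omega
          have hni1 : 1 ≤ n - i := by omega
          have hnilt : n - i < n := by omega
          rw [ih i hilt hi1, ih (n-i) hnilt hni1]
          have hle : 3*i ≤ 3*n := by omega
          have hsub : 3*n - 3*i = 3*(n-i) := by omega
          have hkey : ((3*n).choose (3*i) : ℚ) * (3*i).factorial * (3*(n-i)).factorial
              = (3*n).factorial := by
            rw [← hsub]
            exact_mod_cast congrArg (Nat.cast (R := ℚ))
              (Nat.choose_mul_factorial_mul_factorial hle)
          linear_combination (TauAux.Aq i * TauAux.Aq (n-i)) * hkey
        rw [Finset.sum_congr rfl hterm, ← Finset.mul_sum, ← TauAux.Aq_rec hn2]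
        have hne : (2*(n:ℚ)+1) ≠ 0 := by positivity
        field_simp
  intro n hn
  rw [key n hn]
  have hAq : TauAux.Aq n = (eulerNum (2*n-1) : ℚ)
      / (((2*n-1).factorial : ℚ) * ((2:ℚ)^(2*n) - 1)) := by
    rw [TauAux.Aq, TauAux.Bq, if_neg (by omega : ¬ n = 0), div_div]
    congr 2
    rw [pow_mul]
    norm_num
  rw [hAq, mul_div_assoc]
end
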